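/- arXiv:2605.13917 — 4 statements merged into one kernel-verified Lean document; each statement's English description precedes it below -/
import Mathlib

section
/- Let G = (V, E⁺, E⁰) be a fuzzy graph with weight function ω and let k, d be nonnegative integers. Assume that for every pair of distinct vertices u, v with {u,v} ∉ E⁺ one has |N⁺(u) ∩ N⁺(v)| ≤ k. Let 𝒞 be a clustering of G of cost at most k, let C ∈ 𝒞 be a cluster of size t > 2k + 2d, and let (v₁, …, v_t) be an ordering of C such that each vᵢ has at most d fuzzy neighbors among v_{i+1}, …, v_t. Then the vertices v₁, …, v_{t−2d−2k−1} are pairwise joined by real edges, i.e., {v₁, …, v_{t−2d−2k−1}} is a clique in G⁽⁺⁾. -/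
open Finset

/-- A fuzzy graph: a finite vertex set with disjoint symmetric irreflexive sets of
'real' edges and 'fuzzy' edges; remaining pairs of distinct vertices are 'nonedges'. -/
structure FuzzyGraph (V : Type*) where
  real : V → V → Bool
  fuzzy : V → V → Bool
  real_symm : ∀ u v, real u v = real v u
  fuzzy_symm : ∀ u v, fuzzy u v = fuzzy v u
  real_irrefl : ∀ v, real v v = false
  fuzzy_irrefl : ∀ v, fuzzy v v = false
  not_real_and_fuzzy : ∀ u v, ¬(real u v = true ∧ fuzzy u v = true)

namespace FuzzyGraph

variable {V : Type*}

/-- The pair `{u,v}` is a nonedge: distinct, neither a real nor a fuzzy edge. -/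
def nonedge (G : FuzzyGraph V) (u v : V) : Prop :=
  u ≠ v ∧ ¬G.real u v ∧ ¬G.fuzzy u v

instance (G : FuzzyGraph V) [DecidableEq V] (u v : V) : Decidable (G.nonedge u v) :=
  inferInstanceAs (Decidable (u ≠ v ∧ ¬G.real u v ∧ ¬G.fuzzy u v))

/-- The simple graph `G⁽⁺⁾` of real edges. -/
def plus (G : FuzzyGraph V) : SimpleGraph V where
  Adj u v := G.real u v
  symm := by constructor; intro u v h; rwa [G.real_symm] at h
  loopless := by constructor; intro v h; rw [G.real_irrefl] at h; exact Bool.noConfusion h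

/-- The simple graph `G⁽⁰⁾` of fuzzy edges. -/
def zero (G : FuzzyGraph V) : SimpleGraph V where
  Adj u v := G.fuzzy u v
  symm := by constructor; intro u v h; rwa [G.fuzzy_symm] at h
  loopless := by constructor; intro v h; rw [G.fuzzy_irrefl] at h; exact Bool.noConfusion h

variable [Fintype V] [DecidableEq V]

/-- The real neighborhood `N⁺(v)`. -/
def realNbrs (G : FuzzyGraph V) (v : V) : Finset V := univ.filter fun u => G.real v u

/-- The fuzzy neighborhood `N⁰(v)`. -/
def fuzzyNbrs (G : FuzzyGraph V) (v : V) : Finset V := univ.filter fun u => G.fuzzy v u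

/-- The nonneighborhood `N⁻(v)`. -/
def nonNbrs (G : FuzzyGraph V) (v : V) : Finset V := univ.filter fun u => G.nonedge v u

/-- The closed real neighborhood `N⁺[v]`. -/
def closedRealNbrs (G : FuzzyGraph V) (v : V) : Finset V := insert v (G.realNbrs v)

end FuzzyGraph

/-- `ω` is a valid weight function for `G`: symmetric nonnegative integer weights,
zero exactly on the fuzzy edges. -/
def IsWeight {V : Type*} [Fintype V] [DecidableEq V] (G : FuzzyGraph V) (ω : V → V → ℕ) : Prop :=
  (∀ u v, ω u v = ω v u) ∧ ∀ u v : V, u ≠ v → (ω u v = 0 ↔ G.fuzzy u v)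

/-- The unit weight function: weight 1 on real edges and nonedges, 0 on fuzzy edges. -/
def unitW {V : Type*} (G : FuzzyGraph V) : V → V → ℕ := fun u v => if G.fuzzy u v then 0 else 1

/-- Two vertices lie in a common cluster of the clustering `𝒞`. -/
def together {V : Type*} [Fintype V] [DecidableEq V] (𝒞 : Finpartition (univ : Finset V))
    (u v : V) : Prop :=
  ∃ C ∈ 𝒞.parts, u ∈ C ∧ v ∈ C

instance {V : Type*} [Fintype V] [DecidableEq V] (𝒞 : Finpartition (univ : Finset V)) (u v : V) :
    Decidable (together 𝒞 u v) :=
  inferInstanceAs (Decidable (∃ C ∈ 𝒞.parts, u ∈ C ∧ v ∈ C))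

/-- The cost of a clustering: total weight of real edges between different clusters
plus total weight of nonedges inside clusters.  (Each unordered pair is counted twice
in the sum over ordered pairs, whence the division by 2.) -/
def cost {V : Type*} [Fintype V] [DecidableEq V] (G : FuzzyGraph V) (ω : V → V → ℕ)
    (𝒞 : Finpartition (univ : Finset V)) : ℕ :=
  (∑ p ∈ univ.offDiag,
      ((if G.real p.1 p.2 ∧ ¬together 𝒞 p.1 p.2 then ω p.1 p.2 else 0) +
       (if G.nonedge p.1 p.2 ∧ together 𝒞 p.1 p.2 then ω p.1 p.2 else 0))) / 2

/-- A clique in `G⁽⁺⁾`: pairwise real-adjacent vertices. -/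
def IsRealClique {V : Type*} (G : FuzzyGraph V) (K : Finset V) : Prop :=
  ∀ u ∈ K, ∀ v ∈ K, u ≠ v → G.real u v

/-- A clique in `G⁽⁰⁾`: pairwise fuzzy-adjacent vertices. -/
def IsFuzzyClique {V : Type*} (G : FuzzyGraph V) (K : Finset V) : Prop :=
  ∀ u ∈ K, ∀ v ∈ K, u ≠ v → G.fuzzy u v

/-- A critical clique of `G⁽⁺⁾`: a clique with `⋂_{x ∈ K} N⁺[x] = ⋃_{x ∈ K} N⁺[x]`,
inclusion-wise maximal with this property. -/
def IsCriticalClique {V : Type*} [Fintype V] [DecidableEq V] (G : FuzzyGraph V)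
    (K : Finset V) : Prop :=
  IsRealClique G K ∧ K.inf (G.closedRealNbrs) = K.sup (G.closedRealNbrs) ∧
    ∀ K' : Finset V, K ⊆ K' → IsRealClique G K' →
      K'.inf (G.closedRealNbrs) = K'.sup (G.closedRealNbrs) → K' = K

/-- A simple graph is `c`-closed if every pair of distinct nonadjacent vertices has
fewer than `c` common neighbors. -/
def IsCClosed {V : Type*} (H : SimpleGraph V) (c : ℕ) : Prop :=
  ∀ u v : V, u ≠ v → ¬H.Adj u v → Set.ncard {w | H.Adj u w ∧ H.Adj v w} < c

/-- A fuzzy graph is fuzzy `c`-closed if its fuzzy edge graph `G⁽⁰⁾` is `c`-closed. -/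
def FuzzyCClosed {V : Type*} [Fintype V] [DecidableEq V] (G : FuzzyGraph V) (c : ℕ) : Prop :=
  ∀ u v : V, u ≠ v → ¬G.fuzzy u v → ((G.fuzzyNbrs u) ∩ (G.fuzzyNbrs v)).card < c

/-- In a graph reduced so that real non-adjacent pairs have at most `k` common
real neighbors, in any cluster `C` of size `t > 2k + 2d` of a clustering of cost at most `k`,
the first `t - 2d - 2k - 1` vertices of a fuzzy degeneracy ordering of `C` form a real clique. -/
theorem stmt5 {V : Type*} [Fintype V] [DecidableEq V]
    (G : FuzzyGraph V) (ω : V → V → ℕ) (hω : IsWeight G ω) (k d : ℕ)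
    (hred : ∀ u v : V, u ≠ v → ¬G.real u v → ((G.realNbrs u) ∩ (G.realNbrs v)).card ≤ k)
    (𝒞 : Finpartition (Finset.univ : Finset V)) (hcost : cost G ω 𝒞 ≤ k)
    (C : Finset V) (hC : C ∈ 𝒞.parts) (t : ℕ) (ht : C.card = t) (htlarge : 2 * k + 2 * d < t)
    (σ : Fin t → V) (hσinj : Function.Injective σ) (hσmem : ∀ i, σ i ∈ C)
    (hdeg : ∀ i : Fin t,
      (Finset.univ.filter fun j : Fin t => i < j ∧ G.fuzzy (σ i) (σ j)).card ≤ d) :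
    ∀ i j : Fin t, (i : ℕ) < t - 2 * d - 2 * k - 1 → (j : ℕ) < t - 2 * d - 2 * k - 1 →
      i ≠ j → G.real (σ i) (σ j) := by
  intro i j hi hj hij
  by_contra hreal
  have hσij : σ i ≠ σ j := fun h => hij (hσinj h)
  set m := t - 2 * d - 2 * k - 1 with hm
  -- the tail set S of indices ≥ m
  set S : Finset (Fin t) := Finset.univ.filter (fun l : Fin t => m ≤ (l : ℕ)) with hSdef
  have hsmall : (Finset.univ.filter (fun l : Fin t => (l : ℕ) < m)).card ≤ m := by
    calc (Finset.univ.filter (fun l : Fin t => (l : ℕ) < m)).card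
        ≤ (Finset.range m).card := Finset.card_le_card_of_injOn (fun l : Fin t => (l : ℕ))
          (fun l hl => by
            simp only [Finset.mem_coe, Finset.mem_filter, Finset.mem_univ, true_and] at hl
            simpa using hl)
          (fun a _ b _ h => Fin.val_injective h)
      _ = m := Finset.card_range m
  have hScard : 2 * k + 2 * d + 1 ≤ S.card := by
    have hsplit := Finset.card_filter_add_card_filter_not
      (s := (Finset.univ : Finset (Fin t))) (p := fun l : Fin t => (l : ℕ) < m)
    have hcu : (Finset.univ : Finset (Fin t)).card = t := by simp
    have hSeq : S = Finset.univ.filter (fun l : Fin t => ¬ (l : ℕ) < m) := by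
      apply Finset.filter_congr; intro l _; simp [Nat.not_lt]
    rw [hSeq]
    omega
  have hiS : ∀ l ∈ S, i < l := by
    intro l hl
    simp only [hSdef, Finset.mem_filter, Finset.mem_univ, true_and] at hl
    exact Fin.lt_def.mpr (lt_of_lt_of_le hi hl)
  have hjS : ∀ l ∈ S, j < l := by
    intro l hl
    simp only [hSdef, Finset.mem_filter, Finset.mem_univ, true_and] at hl
    exact Fin.lt_def.mpr (lt_of_lt_of_le hj hl)
  set Fi := Finset.univ.filter (fun l : Fin t => i < l ∧ G.fuzzy (σ i) (σ l)) with hFidef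
  set Fj := Finset.univ.filter (fun l : Fin t => j < l ∧ G.fuzzy (σ j) (σ l)) with hFjdef
  have hFi : Fi.card ≤ d := hdeg i
  have hFj : Fj.card ≤ d := hdeg j
  set T := S \ (Fi ∪ Fj) with hTdef
  have hTcard : 2 * k + 1 ≤ T.card := by
    have h1 : S.card - (Fi ∪ Fj).card ≤ T.card := Finset.le_card_sdiff _ _
    have h2 : (Fi ∪ Fj).card ≤ Fi.card + Fj.card := Finset.card_union_le _ _
    omega
  set A := T.filter (fun l : Fin t => G.real (σ i) (σ l) ∧ G.real (σ j) (σ l)) with hAdef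
  have hAcard : A.card ≤ k := by
    have hle : A.card ≤ ((G.realNbrs (σ i)) ∩ (G.realNbrs (σ j))).card := by
      apply Finset.card_le_card_of_injOn σ
      · intro l hl
        simp only [hAdef, Finset.mem_coe, Finset.mem_filter] at hl
        simp only [FuzzyGraph.realNbrs, Finset.mem_coe, Finset.mem_inter, Finset.mem_filter,
          Finset.mem_univ, true_and]
        exact hl.2
      · exact fun a _ b _ h => hσinj h
    exact hle.trans (hred _ _ hσij hreal)
  set B := T \ A with hBdef
  have hAT : A ⊆ T := Finset.filter_subset _ _
  have hBcard : k + 1 ≤ B.card := by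
    have hB' : B.card = T.card - A.card := Finset.card_sdiff_of_subset hAT
    omega
  -- facts about elements of B
  set p : Fin t → V := fun l => if G.real (σ i) (σ l) then σ j else σ i with hpdef
  have hBfacts : ∀ l ∈ B, (p l = σ i ∨ p l = σ j) ∧ G.nonedge (p l) (σ l) ∧
      together 𝒞 (p l) (σ l) ∧ σ l ≠ σ i ∧ σ l ≠ σ j := by
    intro l hl
    simp only [hBdef, Finset.mem_sdiff] at hl
    obtain ⟨hlT, hlA⟩ := hl
    have hlT' := hlT
    simp only [hTdef, Finset.mem_sdiff, Finset.mem_union] at hlT'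
    obtain ⟨hlS, hlF⟩ := hlT'
    have hil : i < l := hiS l hlS
    have hjl : j < l := hjS l hlS
    have hnfi : ¬ G.fuzzy (σ i) (σ l) := by
      intro h
      exact hlF (Or.inl (by simp [hFidef, hil, h]))
    have hnfj : ¬ G.fuzzy (σ j) (σ l) := by
      intro h
      exact hlF (Or.inr (by simp [hFjdef, hjl, h]))
    have hli : σ l ≠ σ i := fun h => absurd (hσinj h) (Fin.ne_of_gt hil)
    have hlj : σ l ≠ σ j := fun h => absurd (hσinj h) (Fin.ne_of_gt hjl)
    have hnboth : ¬ (G.real (σ i) (σ l) ∧ G.real (σ j) (σ l)) := by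
      intro h
      exact hlA (by simp [hAdef, hlT, h])
    have htog : ∀ a, a = σ i ∨ a = σ j → together 𝒞 a (σ l) := by
      rintro a (rfl | rfl)
      · exact ⟨C, hC, hσmem i, hσmem l⟩
      · exact ⟨C, hC, hσmem j, hσmem l⟩
    by_cases hri : G.real (σ i) (σ l)
    · have hpl : p l = σ j := by simp [hpdef, hri]
      have hnr : ¬ G.real (σ j) (σ l) := fun h => hnboth ⟨hri, h⟩
      rw [hpl]
      exact ⟨Or.inr rfl, ⟨hlj.symm, hnr, hnfj⟩, htog _ (Or.inr rfl), hli, hlj⟩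
    · have hpl : p l = σ i := by simp [hpdef, hri]
      rw [hpl]
      exact ⟨Or.inl rfl, ⟨hli.symm, hri, hnfi⟩, htog _ (Or.inl rfl), hli, hlj⟩
  -- the cost summand
  set F : V × V → ℕ := fun q =>
    (if G.real q.1 q.2 ∧ ¬together 𝒞 q.1 q.2 then ω q.1 q.2 else 0) +
    (if G.nonedge q.1 q.2 ∧ together 𝒞 q.1 q.2 then ω q.1 q.2 else 0) with hFdef
  set P : Finset (V × V) := B.image (fun l => (p l, σ l)) ∪ B.image (fun l => (σ l, p l))
    with hPdef
  have hPsub : P ⊆ Finset.univ.offDiag := by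
    intro q hq
    simp only [hPdef, Finset.mem_union, Finset.mem_image] at hq
    rcases hq with ⟨l, hl, rfl⟩ | ⟨l, hl, rfl⟩ <;>
      obtain ⟨-, hne, -, -, -⟩ := hBfacts l hl <;>
      simp [Finset.mem_offDiag] <;> [exact hne.1; exact fun h => hne.1 h.symm]
  have hPcard : 2 * k + 2 ≤ P.card := by
    have hinj1 : Set.InjOn (fun l => (p l, σ l)) B := by
      intro a ha b hb h
      exact hσinj (congrArg Prod.snd h)
    have hinj2 : Set.InjOn (fun l => (σ l, p l)) B := by
      intro a ha b hb h
      exact hσinj (congrArg Prod.fst h)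
    have hc1 : (B.image (fun l => (p l, σ l))).card = B.card :=
      Finset.card_image_of_injOn hinj1
    have hc2 : (B.image (fun l => (σ l, p l))).card = B.card :=
      Finset.card_image_of_injOn hinj2
    have hdisj : Disjoint (B.image (fun l => (p l, σ l))) (B.image (fun l => (σ l, p l))) := by
      rw [Finset.disjoint_left]
      intro q hq1 hq2
      simp only [Finset.mem_image] at hq1 hq2
      obtain ⟨a, ha, rfl⟩ := hq1
      obtain ⟨b, hb, heq⟩ := hq2
      obtain ⟨hpa, -, -, hai, haj⟩ := hBfacts a ha
      have h1 : σ b = p a := congrArg Prod.fst heq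
      rcases hpa with h | h <;> rw [h] at h1
      · obtain ⟨-, -, -, hbi, -⟩ := hBfacts b hb
        exact hbi h1
      · obtain ⟨-, -, -, -, hbj⟩ := hBfacts b hb
        exact hbj h1
    have := Finset.card_union_of_disjoint hdisj
    rw [hPdef, this, hc1, hc2]
    omega
  have hF1 : ∀ q ∈ P, 1 ≤ F q := by
    intro q hq
    simp only [hPdef, Finset.mem_union, Finset.mem_image] at hq
    have hω1 : ∀ u v : V, G.nonedge u v → 1 ≤ ω u v := by
      rintro u v ⟨hne, -, hnf⟩
      have h0 : ω u v ≠ 0 := fun h => hnf ((hω.2 u v hne).mp h)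
      omega
    rcases hq with ⟨l, hl, rfl⟩ | ⟨l, hl, rfl⟩
    · obtain ⟨-, hne, htog, -, -⟩ := hBfacts l hl
      have : F (p l, σ l) = (if G.real (p l) (σ l) ∧ ¬together 𝒞 (p l) (σ l)
          then ω (p l) (σ l) else 0) +
          (if G.nonedge (p l) (σ l) ∧ together 𝒞 (p l) (σ l) then ω (p l) (σ l) else 0) := rfl
      have hnr : ¬ (G.real (p l) (σ l) ∧ ¬ together 𝒞 (p l) (σ l)) := fun h => hne.2.1 h.1
      rw [this, if_neg hnr, if_pos ⟨hne, htog⟩]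
      have := hω1 _ _ hne
      omega
    · obtain ⟨-, hne, htog, -, -⟩ := hBfacts l hl
      have hne' : G.nonedge (σ l) (p l) := by
        obtain ⟨h1, h2, h3⟩ := hne
        refine ⟨h1.symm, ?_, ?_⟩
        · rwa [G.real_symm]
        · rwa [G.fuzzy_symm]
      have htog' : together 𝒞 (σ l) (p l) := by
        obtain ⟨D, hD, h1, h2⟩ := htog
        exact ⟨D, hD, h2, h1⟩
      have : F (σ l, p l) = (if G.real (σ l) (p l) ∧ ¬together 𝒞 (σ l) (p l)
          then ω (σ l) (p l) else 0) +
          (if G.nonedge (σ l) (p l) ∧ together 𝒞 (σ l) (p l) then ω (σ l) (p l) else 0) := rfl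
      have hnr : ¬ (G.real (σ l) (p l) ∧ ¬ together 𝒞 (σ l) (p l)) := fun h => hne'.2.1 h.1
      rw [this, if_neg hnr, if_pos ⟨hne', htog'⟩]
      have := hω1 _ _ hne'
      omega
  have hsum : 2 * k + 2 ≤ ∑ q ∈ Finset.univ.offDiag, F q := by
    calc 2 * k + 2 ≤ P.card := hPcard
    _ = ∑ q ∈ P, 1 := by simp
    _ ≤ ∑ q ∈ P, F q := Finset.sum_le_sum hF1
    _ ≤ ∑ q ∈ Finset.univ.offDiag, F q :=
        Finset.sum_le_sum_of_subset_of_nonneg hPsub (fun _ _ _ => Nat.zero_le _)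
  have hcost' : k + 1 ≤ cost G ω 𝒞 := by
    rw [cost]
    rw [Nat.le_div_iff_mul_le (by norm_num)]
    calc (k + 1) * 2 = 2 * k + 2 := by ring
    _ ≤ ∑ q ∈ Finset.univ.offDiag, F q := hsum
    _ = _ := rfl
  omega
end

section
/- Let G = (V, E⁺, E⁰) be a fuzzy graph with weight function ω and let k ≥ 1 and d ≥ 1 be integers. Assume: (i) for every pair of distinct vertices u, v with {u,v} ∉ E⁺ one has |N⁺(u) ∩ N⁺(v)| ≤ k; (ii) every critical clique of G⁽⁺⁾ has at most k + 2 vertices; (iii) every connected component of G⁽⁺⁾ contains two vertices that form a nonedge of G; (iv) there is an ordering (v₁, …, v_n) of V such that each vᵢ has at most d fuzzy neighbors among v_{i+1}, …, v_n. If G admits a clustering of cost at most k, then |V| ≤ 30k³d. -/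
open Finset

section StmtSevenAux

variable {V : Type*} [Fintype V] [DecidableEq V]

private lemma critClass_card_le (G : FuzzyGraph V) (k : ℕ)
    (h2 : ∀ K : Finset V, IsCriticalClique G K → K.card ≤ k + 2) (y : V) :
    (univ.filter fun x => G.closedRealNbrs x = G.closedRealNbrs y).card ≤ k + 2 := by
  set Q : Finset V := univ.filter fun x => G.closedRealNbrs x = G.closedRealNbrs y with hQdef
  have hmemQ : ∀ x ∈ Q, G.closedRealNbrs x = G.closedRealNbrs y := by
    intro x hx
    exact (Finset.mem_filter.1 hx).2
  have hyQ : y ∈ Q := by simp [hQdef]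
  have hself : ∀ x : V, x ∈ G.closedRealNbrs x := fun x => Finset.mem_insert_self x _
  have hreal_of_mem : ∀ x z : V, x ≠ z → x ∈ G.closedRealNbrs z → G.real x z := by
    intro x z hne hx
    rcases Finset.mem_insert.1 hx with h | h
    · exact absurd h hne
    · rw [G.real_symm]
      simpa [FuzzyGraph.realNbrs] using h
  have hclique : IsRealClique G Q := by
    intro u hu v hv huv
    apply hreal_of_mem u v huv
    rw [hmemQ v hv, ← hmemQ u hu]
    exact hself u
  have hinfsup : Q.inf G.closedRealNbrs = Q.sup G.closedRealNbrs := by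
    have hinf : Q.inf G.closedRealNbrs = G.closedRealNbrs y := by
      apply le_antisymm (Finset.inf_le hyQ)
      exact Finset.le_inf fun x hx => le_of_eq (hmemQ x hx).symm
    have hsup : Q.sup G.closedRealNbrs = G.closedRealNbrs y := by
      apply le_antisymm
      · exact Finset.sup_le fun x hx => le_of_eq (hmemQ x hx)
      · exact Finset.le_sup hyQ
    rw [hinf, hsup]
  have hmax : ∀ K' : Finset V, Q ⊆ K' → IsRealClique G K' →
      K'.inf G.closedRealNbrs = K'.sup G.closedRealNbrs → K' = Q := by
    intro K' hsub hcl hK'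
    have hyK' : y ∈ K' := hsub hyQ
    have hconst : ∀ x ∈ K', G.closedRealNbrs x = G.closedRealNbrs y := by
      intro x hx
      have h1 : K'.inf G.closedRealNbrs ≤ G.closedRealNbrs x := Finset.inf_le hx
      have h2 : G.closedRealNbrs x ≤ K'.sup G.closedRealNbrs := Finset.le_sup hx
      have h3 : K'.inf G.closedRealNbrs ≤ G.closedRealNbrs y := Finset.inf_le hyK'
      have h4 : G.closedRealNbrs y ≤ K'.sup G.closedRealNbrs := Finset.le_sup hyK'
      have hx' : G.closedRealNbrs x = K'.inf G.closedRealNbrs :=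
        le_antisymm (hK' ▸ h2) h1
      have hy' : G.closedRealNbrs y = K'.inf G.closedRealNbrs :=
        le_antisymm (hK' ▸ h4) h3
      rw [hx', hy']
    apply Finset.Subset.antisymm _ hsub
    intro x hx
    rw [hQdef]
    simp [hconst x hx]
  exact h2 Q ⟨hclique, hinfsup, hmax⟩


private lemma fuzzy_degsum_le (G : FuzzyGraph V) (d : ℕ)
    (σ : Fin (Fintype.card V) ≃ V)
    (hσ : ∀ i : Fin (Fintype.card V),
      (Finset.univ.filter fun j : Fin (Fintype.card V) => i < j ∧ G.fuzzy (σ i) (σ j)).card ≤ d)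
    (C : Finset V) (hC : C.Nonempty) :
    ∑ w ∈ C, (C.filter fun u => G.fuzzy w u).card ≤ 2 * d * (C.card - 1) := by
  set fwd : V → ℕ := fun w => (C.filter fun u => G.fuzzy w u ∧ σ.symm w < σ.symm u).card with hfwd
  set bwd : V → ℕ := fun w => (C.filter fun u => G.fuzzy w u ∧ σ.symm u < σ.symm w).card with hbwd
  have hsplit : ∀ w, (C.filter fun u => G.fuzzy w u).card = fwd w + bwd w := by
    intro w
    simp only [hfwd, hbwd, Finset.card_filter]
    rw [← Finset.sum_add_distrib]
    apply Finset.sum_congr rfl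
    intro u _
    by_cases hf : G.fuzzy w u
    · have hne : u ≠ w := by
        intro h; subst h
        rw [G.fuzzy_irrefl] at hf; exact Bool.noConfusion hf
      have hne' : σ.symm w ≠ σ.symm u := by
        intro h
        exact hne (by simpa using (congrArg σ h).symm)
      rcases lt_or_gt_of_ne hne' with h | h
      · simp [hf, h, not_lt.2 h.le]
      · simp [hf, h, not_lt.2 h.le]
    · simp [hf]
  have hswap : ∑ w ∈ C, bwd w = ∑ w ∈ C, fwd w := by
    simp only [hfwd, hbwd, Finset.card_filter]
    rw [Finset.sum_comm]
    apply Finset.sum_congr rfl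
    intro u _
    apply Finset.sum_congr rfl
    intro w _
    congr 1
    rw [G.fuzzy_symm]
  have hfwd_le : ∀ w, fwd w ≤ d := by
    intro w
    refine le_trans ?_ (hσ (σ.symm w))
    apply Finset.card_le_card_of_injOn (fun u => σ.symm u)
    · intro u hu
      simp only [Finset.mem_coe, Finset.mem_filter] at hu ⊢
      refine ⟨Finset.mem_univ _, hu.2.2, ?_⟩
      simpa using hu.2.1
    · intro a _ b _ hab
      simpa using congrArg σ hab
  obtain ⟨b, hbC, hbmax⟩ := Finset.exists_max_image C (fun x => σ.symm x) hC
  have hfwdb : fwd b = 0 := by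
    simp only [hfwd, Finset.card_eq_zero, Finset.filter_eq_empty_iff]
    intro u hu
    rintro ⟨-, hlt⟩
    exact absurd (hbmax u hu) (not_le.2 hlt)
  have hsumfwd : ∑ w ∈ C, fwd w ≤ d * (C.card - 1) := by
    rw [← Finset.add_sum_erase C fwd hbC, hfwdb, zero_add]
    calc ∑ w ∈ C.erase b, fwd w ≤ ∑ w ∈ C.erase b, d := Finset.sum_le_sum fun w _ => hfwd_le w
    _ = (C.erase b).card * d := by rw [Finset.sum_const, smul_eq_mul]
    _ = d * (C.card - 1) := by rw [Finset.card_erase_of_mem hbC, mul_comm]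
  calc ∑ w ∈ C, (C.filter fun u => G.fuzzy w u).card = ∑ w ∈ C, (fwd w + bwd w) :=
        Finset.sum_congr rfl fun w _ => hsplit w
    _ = ∑ w ∈ C, fwd w + ∑ w ∈ C, bwd w := Finset.sum_add_distrib
    _ = 2 * ∑ w ∈ C, fwd w := by rw [hswap]; ring
    _ ≤ 2 * (d * (C.card - 1)) := by
        exact Nat.mul_le_mul_left 2 hsumfwd
    _ = 2 * d * (C.card - 1) := by ring

end StmtSevenAux

set_option maxHeartbeats 2000000 in
/-- Under the stated reducedness conditions, if additionally every connected
component of `G⁽⁺⁾` contains a nonedge and `G` admits a clustering of cost at most `k`,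
then `|V| ≤ 30k³d`. -/
theorem stmt7 {V : Type*} [Fintype V] [DecidableEq V]
    (G : FuzzyGraph V) (ω : V → V → ℕ) (hω : IsWeight G ω) (k d : ℕ) (hk : 1 ≤ k) (hd : 1 ≤ d)
    (h1 : ∀ u v : V, u ≠ v → ¬G.real u v → ((G.realNbrs u) ∩ (G.realNbrs v)).card ≤ k)
    (h2 : ∀ K : Finset V, IsCriticalClique G K → K.card ≤ k + 2)
    (h3 : ∀ w : V, ∃ u v : V, G.plus.Reachable w u ∧ G.plus.Reachable w v ∧ G.nonedge u v)
    (h4 : ∃ σ : Fin (Fintype.card V) ≃ V, ∀ i : Fin (Fintype.card V),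
      (Finset.univ.filter fun j : Fin (Fintype.card V) => i < j ∧ G.fuzzy (σ i) (σ j)).card ≤ d)
    (hsol : ∃ 𝒞 : Finpartition (Finset.univ : Finset V), cost G ω 𝒞 ≤ k) :
    Fintype.card V ≤ 30 * k ^ 3 * d := by

  obtain ⟨𝒞, hcost⟩ := hsol
  obtain ⟨σ, hσ⟩ := h4
  classical
  set paid : V → V → Prop := fun u v =>
    (G.real u v ∧ ¬ together 𝒞 u v) ∨ (G.nonedge u v ∧ together 𝒞 u v) with hpaiddef
  have together_symm : ∀ u v : V, together 𝒞 u v → together 𝒞 v u := by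
    rintro u v ⟨C, hC, hu, hv⟩; exact ⟨C, hC, hv, hu⟩
  have nonedge_symm : ∀ u v : V, G.nonedge u v → G.nonedge v u := by
    rintro u v ⟨hne, hr, hf⟩
    exact ⟨hne.symm, by rwa [G.real_symm], by rwa [G.fuzzy_symm]⟩
  have paid_ne : ∀ u v : V, paid u v → u ≠ v := by
    rintro u v (⟨hr, -⟩ | ⟨hn, -⟩)
    · intro h; subst h; rw [G.real_irrefl] at hr; exact Bool.noConfusion hr
    · exact hn.1
  set A : Finset V := univ.filter (fun u => ∃ v, paid u v) with hAdef
  set f : V × V → ℕ := fun p =>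
    (if G.real p.1 p.2 ∧ ¬together 𝒞 p.1 p.2 then ω p.1 p.2 else 0) +
    (if G.nonedge p.1 p.2 ∧ together 𝒞 p.1 p.2 then ω p.1 p.2 else 0) with hfdef
  have hcost' : (∑ p ∈ univ.offDiag, f p) / 2 ≤ k := hcost
  have hfswap : ∀ p : V × V, f p = f p.swap := by
    intro p
    have hiff1 : (G.real p.1 p.2 = true ∧ ¬together 𝒞 p.1 p.2) ↔
        (G.real p.2 p.1 = true ∧ ¬together 𝒞 p.2 p.1) := by
      constructor <;> rintro ⟨h, h'⟩ <;>
        exact ⟨by rwa [G.real_symm], fun hh => h' (together_symm _ _ hh)⟩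
    have hiff2 : (G.nonedge p.1 p.2 ∧ together 𝒞 p.1 p.2) ↔
        (G.nonedge p.2 p.1 ∧ together 𝒞 p.2 p.1) := by
      constructor <;> rintro ⟨h, h'⟩ <;>
        exact ⟨nonedge_symm _ _ h, together_symm _ _ h'⟩
    simp only [hfdef, Prod.fst_swap, Prod.snd_swap]
    rw [if_congr hiff1 (hω.1 p.1 p.2) rfl, if_congr hiff2 (hω.1 p.1 p.2) rfl]
  have hTeven : ∑ p ∈ univ.offDiag, f p =
      2 * ∑ p ∈ univ.offDiag.filter (fun p => σ.symm p.1 < σ.symm p.2), f p := by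
    rw [two_mul]
    nth_rewrite 1 [← Finset.sum_filter_add_sum_filter_not univ.offDiag
      (fun p => σ.symm p.1 < σ.symm p.2) f]
    rw [add_comm]
    congr 1
    have hmm : ∀ p : V × V, p ∈ univ.offDiag.filter (fun p => ¬ σ.symm p.1 < σ.symm p.2) →
        p.swap ∈ univ.offDiag.filter (fun p => σ.symm p.1 < σ.symm p.2) := by
      intro p hp
      simp only [Finset.mem_filter, Finset.mem_offDiag, Finset.mem_univ, true_and,
        Prod.fst_swap, Prod.snd_swap] at hp ⊢
      obtain ⟨hne, hnlt⟩ := hp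
      refine ⟨hne.symm, ?_⟩
      have : σ.symm p.2 ≠ σ.symm p.1 := by
        intro h; exact hne (by simpa using (congrArg σ h).symm)
      omega
    have hmm2 : ∀ p : V × V, p ∈ univ.offDiag.filter (fun p => σ.symm p.1 < σ.symm p.2) →
        p.swap ∈ univ.offDiag.filter (fun p => ¬ σ.symm p.1 < σ.symm p.2) := by
      intro p hp
      simp only [Finset.mem_filter, Finset.mem_offDiag, Finset.mem_univ, true_and,
        Prod.fst_swap, Prod.snd_swap] at hp ⊢
      exact ⟨hp.1.symm, by omega⟩
    exact Finset.sum_nbij' (fun p => p.swap) (fun p => p.swap) hmm hmm2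
      (fun p _ => Prod.swap_swap p) (fun p _ => Prod.swap_swap p)
      (fun p _ => hfswap p)
  have hT2k : ∑ p ∈ univ.offDiag, f p ≤ 2 * k := by
    rw [hTeven] at hcost' ⊢
    rw [Nat.mul_div_cancel_left _ (by norm_num : 0 < 2)] at hcost'
    omega
  set P : Finset (V × V) := univ.offDiag.filter (fun p => paid p.1 p.2) with hPdef
  have hfone : ∀ p ∈ P, 1 ≤ f p := by
    intro p hp
    rw [hPdef] at hp
    simp only [Finset.mem_filter] at hp
    have hne : p.1 ≠ p.2 := paid_ne _ _ hp.2
    have homega : ω p.1 p.2 ≠ 0 := by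
      intro h0
      have hfz : G.fuzzy p.1 p.2 := (hω.2 p.1 p.2 hne).1 h0
      rcases hp.2 with ⟨hr, -⟩ | ⟨hn, -⟩
      · exact G.not_real_and_fuzzy p.1 p.2 ⟨hr, hfz⟩
      · exact hn.2.2 hfz
    rcases hp.2 with h | h
    · simp only [hfdef, if_pos h]; omega
    · simp only [hfdef, if_pos h]; omega
  have hPcard : P.card ≤ 2 * k := by
    calc P.card = P.card • 1 := by simp
      _ ≤ ∑ p ∈ P, f p := Finset.card_nsmul_le_sum P f 1 hfone
      _ ≤ ∑ p ∈ univ.offDiag, f p := Finset.sum_le_sum_of_subset (Finset.filter_subset _ _)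
      _ ≤ 2 * k := hT2k
  have hAcard : A.card ≤ 2 * k := by
    have hsub : A ⊆ P.image Prod.fst := by
      intro u hu
      rw [hAdef] at hu
      simp only [Finset.mem_filter, Finset.mem_univ, true_and] at hu
      obtain ⟨v, hv⟩ := hu
      apply Finset.mem_image.2
      refine ⟨(u, v), ?_, rfl⟩
      rw [hPdef]
      simp only [Finset.mem_filter, Finset.mem_offDiag, Finset.mem_univ, true_and]
      exact ⟨paid_ne _ _ hv, hv⟩
    calc A.card ≤ (P.image Prod.fst).card := Finset.card_le_card hsub
      _ ≤ P.card := Finset.card_image_le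
      _ ≤ 2 * k := hPcard
  -- partition facts
  have mem_together : ∀ C ∈ 𝒞.parts, ∀ u ∈ C, ∀ v ∈ C, together 𝒞 u v :=
    fun C hC u hu v hv => ⟨C, hC, hu, hv⟩
  have together_mem : ∀ C ∈ 𝒞.parts, ∀ u ∈ C, ∀ v, together 𝒞 u v → v ∈ C := by
    rintro C hC u hu v ⟨C', hC', hu', hv'⟩
    rwa [𝒞.eq_of_mem_parts hC' hC hu' hu] at hv'
  -- every part meets A
  have hmeet : ∀ C ∈ 𝒞.parts, (C ∩ A).Nonempty := by
    intro C hC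
    by_contra hcon
    have hcon' : ∀ x ∈ C, x ∉ A := fun x hxC hxA =>
      hcon ⟨x, Finset.mem_inter.2 ⟨hxC, hxA⟩⟩
    have hnopaid : ∀ x ∈ C, ∀ v, ¬ paid x v := by
      intro x hx v hp
      refine hcon' x hx ?_
      rw [hAdef]
      simp only [Finset.mem_filter, Finset.mem_univ, true_and]
      exact ⟨v, hp⟩
    obtain ⟨w, hw⟩ := 𝒞.nonempty_of_mem_parts hC
    have key : ∀ (x y : V) (p : G.plus.Walk x y), x ∈ C → y ∈ C := by
      intro x y p
      induction p with
      | nil => exact fun h => h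
      | @cons a b c hadj p ih =>
        intro ha
        apply ih
        have hr : G.real a b := hadj
        have htog : together 𝒞 a b := by
          by_contra hnt
          exact hnopaid a ha b (Or.inl ⟨hr, hnt⟩)
        exact together_mem C hC a ha b htog
    obtain ⟨u, v, hwu, hwv, huv⟩ := h3 w
    obtain ⟨pu⟩ := hwu
    obtain ⟨pv⟩ := hwv
    have hu : u ∈ C := key w u pu hw
    have hv : v ∈ C := key w v pv hw
    exact hnopaid u hu v (Or.inr ⟨huv, mem_together C hC u hu v hv⟩)
  -- per-cluster bound
  have hcluster : ∀ C ∈ 𝒞.parts, C.card ≤ 4*d*(k+1) + 2*k + 2*(C ∩ A).card + 3 := by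
    intro C hC
    by_contra hcon
    push_neg at hcon
    set a := (C ∩ A).card with hadef
    set m := C.card with hmdef
    set D := m - (k + a + 2) with hDdef
    have hDm : D + (k + a + 2) = m := by omega
    set S := C \ A with hSdef
    have hSC : ∀ u ∈ S, u ∈ C := fun u hu => (Finset.mem_sdiff.1 hu).1
    have hSnopaid : ∀ u ∈ S, ∀ v, ¬ paid u v := by
      intro u hu v hp
      have huA : u ∈ A := by
        rw [hAdef]
        simp only [Finset.mem_filter, Finset.mem_univ, true_and]
        exact ⟨v, hp⟩
      exact (Finset.mem_sdiff.1 hu).2 huA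
    have hRealIn : ∀ u ∈ S, ∀ z, G.real u z → z ∈ C := by
      intro u hu z hr
      have htog : together 𝒞 u z := by
        by_contra hnt
        exact hSnopaid u hu z (Or.inl ⟨hr, hnt⟩)
      exact together_mem C hC u (hSC u hu) z htog
    have hFuzzy : ∀ u ∈ S, ∀ z ∈ C, z ≠ u → ¬ G.real u z → G.fuzzy u z := by
      intro u hu z hz hne hnr
      by_contra hnf
      exact hSnopaid u hu z
        (Or.inr ⟨⟨Ne.symm hne, hnr, hnf⟩, mem_together C hC u (hSC u hu) z hz⟩)
    set degC : V → ℕ := fun w => (C.filter fun u => G.fuzzy w u).card with hdegdef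
    have hdegsum : ∀ u ∈ S, ∀ v ∈ C, G.fuzzy u v → m ≤ k + a + 2 + degC u + degC v := by
      intro u hu v hv hf
      have hne : u ≠ v := by
        intro h; subst h; rw [G.fuzzy_irrefl] at hf; exact Bool.noConfusion hf
      have hnr : ¬ G.real u v := fun hr => G.not_real_and_fuzzy u v ⟨hr, hf⟩
      have hsub : C ⊆ insert u (insert v ((G.realNbrs u ∩ G.realNbrs v) ∪
          (C.filter fun x => G.fuzzy u x) ∪ (C.filter fun x => G.fuzzy v x) ∪ (C ∩ A))) := by
        intro w hw
        simp only [Finset.mem_insert, Finset.mem_union, Finset.mem_filter, Finset.mem_inter,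
          FuzzyGraph.realNbrs, Finset.mem_univ, true_and]
        by_cases hwu : w = u
        · exact Or.inl hwu
        right
        by_cases hwv : w = v
        · exact Or.inl hwv
        right
        by_cases hwA : w ∈ A
        · exact Or.inr ⟨hw, hwA⟩
        have hwS : w ∈ S := Finset.mem_sdiff.2 ⟨hw, hwA⟩
        left
        by_cases hfu : G.fuzzy u w
        · exact Or.inl (Or.inr ⟨hw, hfu⟩)
        have hru : G.real u w := by
          by_contra hru
          have := hFuzzy w hwS u (hSC u hu) (Ne.symm hwu) (fun h => hru (by rwa [G.real_symm] at h))
          rw [G.fuzzy_symm] at this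
          exact hfu this
        by_cases hfv : G.fuzzy v w
        · exact Or.inr ⟨hw, hfv⟩
        left; left
        have hrv : G.real v w := by
          by_contra hrv
          have := hFuzzy w hwS v hv (Ne.symm hwv) (fun h => hrv (by rwa [G.real_symm] at h))
          rw [G.fuzzy_symm] at this
          exact hfv this
        exact ⟨hru, hrv⟩
      have t0 := Finset.card_le_card hsub
      have t1 := Finset.card_insert_le u (insert v ((G.realNbrs u ∩ G.realNbrs v) ∪
          (C.filter fun x => G.fuzzy u x) ∪ (C.filter fun x => G.fuzzy v x) ∪ (C ∩ A)))
      have t2 := Finset.card_insert_le v ((G.realNbrs u ∩ G.realNbrs v) ∪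
          (C.filter fun x => G.fuzzy u x) ∪ (C.filter fun x => G.fuzzy v x) ∪ (C ∩ A))
      have t3 := Finset.card_union_le ((G.realNbrs u ∩ G.realNbrs v) ∪
          (C.filter fun x => G.fuzzy u x) ∪ (C.filter fun x => G.fuzzy v x)) (C ∩ A)
      have t4 := Finset.card_union_le ((G.realNbrs u ∩ G.realNbrs v) ∪
          (C.filter fun x => G.fuzzy u x)) (C.filter fun x => G.fuzzy v x)
      have t5 := Finset.card_union_le (G.realNbrs u ∩ G.realNbrs v)
          (C.filter fun x => G.fuzzy u x)
      have t6 := h1 u v hne hnr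
      have e1 : (C.filter fun x => G.fuzzy u x).card = degC u := rfl
      have e2 : (C.filter fun x => G.fuzzy v x).card = degC v := rfl
      omega
    set W := C.filter (fun w => D ≤ 2 * degC w) with hWdef
    have hWsub : W ⊆ C := Finset.filter_subset _ _
    set Sstar := S \ W with hSsdef
    have hSsS : ∀ u ∈ Sstar, u ∈ S := fun u hu => (Finset.mem_sdiff.1 hu).1
    have hnotW : ∀ u ∈ Sstar, 2 * degC u < D := by
      intro u hu
      have hnw : u ∉ W := (Finset.mem_sdiff.1 hu).2
      rw [hWdef] at hnw
      simp only [Finset.mem_filter, not_and, not_le] at hnw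
      exact hnw (hSC u (hSsS u hu))
    have hcover : ∀ u ∈ Sstar, ∀ v ∈ C, G.fuzzy u v → v ∈ W := by
      intro u hu v hv hf
      have hds := hdegsum u (hSsS u hu) v hv hf
      have hnw := hnotW u hu
      rw [hWdef]
      simp only [Finset.mem_filter]
      exact ⟨hv, by omega⟩
    have hclique : ∀ u ∈ Sstar, ∀ v ∈ Sstar, u ≠ v → G.real u v := by
      intro u hu v hv hne
      by_contra hnr
      have hf : G.fuzzy u v :=
        hFuzzy u (hSsS u hu) v (hSC v (hSsS v hv)) (Ne.symm hne) hnr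
      exact (Finset.mem_sdiff.1 hv).2 (hcover u hu v (hSC v (hSsS v hv)) hf)
    set Sep := C.filter (fun z => ∃ v ∈ Sstar, G.fuzzy z v) with hSepdef
    have hSepW : Sep ⊆ W := by
      intro z hz
      rw [hSepdef] at hz
      simp only [Finset.mem_filter] at hz
      obtain ⟨hzC, v, hv, hf⟩ := hz
      exact hcover v hv z hzC (by rw [G.fuzzy_symm]; exact hf)
    have hSepk : ∀ z ∈ Sep, (Sstar.filter fun y => G.real z y).card ≤ k := by
      intro z hz
      rw [hSepdef] at hz
      simp only [Finset.mem_filter] at hz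
      obtain ⟨hzC, v, hvS, hf⟩ := hz
      have hzv : z ≠ v := by
        intro h; subst h; rw [G.fuzzy_irrefl] at hf; exact Bool.noConfusion hf
      have hnr : ¬ G.real z v := fun hr => G.not_real_and_fuzzy z v ⟨hr, hf⟩
      refine le_trans (Finset.card_le_card ?_) (h1 z v hzv hnr)
      intro y hy
      simp only [Finset.mem_filter] at hy
      obtain ⟨hyS, hry⟩ := hy
      have hyv : y ≠ v := by intro h; subst h; exact hnr hry
      simp only [Finset.mem_inter, FuzzyGraph.realNbrs, Finset.mem_filter, Finset.mem_univ,
        true_and]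
      exact ⟨hry, hclique v hvS y hyS (Ne.symm hyv)⟩
    set Uns := Sstar.filter (fun y => ∀ z ∈ Sep, ¬ G.real z y) with hUnsdef
    have hUns_card : Uns.card ≤ k + 2 := by
      rcases Finset.eq_empty_or_nonempty Uns with he | ⟨y0, hy0⟩
      · rw [he]; simp
      have hkey : ∀ y ∈ Uns, ∀ y' ∈ Uns, ∀ z, z ∈ G.closedRealNbrs y →
          z ∉ G.closedRealNbrs y' → False := by
        intro y hy y' hy' z hz hz'
        have hyS : y ∈ Sstar := (Finset.mem_filter.1 hy).1
        have hy'S : y' ∈ Sstar := (Finset.mem_filter.1 hy').1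
        have hynoreal : ∀ z ∈ Sep, ¬ G.real z y := (Finset.mem_filter.1 hy).2
        have hz'' : z ≠ y' ∧ ¬ G.real y' z := by
          constructor
          · intro h; subst h; exact hz' (Finset.mem_insert_self _ _)
          · intro hr
            refine hz' (Finset.mem_insert.2 (Or.inr ?_))
            simp only [FuzzyGraph.realNbrs, Finset.mem_filter, Finset.mem_univ, true_and]
            exact hr
        rcases Finset.mem_insert.1 hz with h | h
        · subst h
          have hne : y' ≠ z := fun h => hz''.1 h.symm
          exact hz''.2 (hclique y' hy'S z hyS hne)
        · have hry : G.real y z := by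
            simpa only [FuzzyGraph.realNbrs, Finset.mem_filter, Finset.mem_univ, true_and] using h
          have hzC : z ∈ C := hRealIn y (hSsS y hyS) z hry
          have hfz : G.fuzzy y' z := hFuzzy y' (hSsS y' hy'S) z hzC hz''.1 hz''.2
          have hzSep : z ∈ Sep := by
            rw [hSepdef]
            simp only [Finset.mem_filter]
            exact ⟨hzC, y', hy'S, by rw [G.fuzzy_symm]; exact hfz⟩
          exact hynoreal z hzSep (by rw [G.real_symm]; exact hry)
      have hsubQ : Uns ⊆ univ.filter (fun x => G.closedRealNbrs x = G.closedRealNbrs y0) := by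
        intro y hy
        simp only [Finset.mem_filter, Finset.mem_univ, true_and]
        apply Finset.Subset.antisymm
        · intro z hz; by_contra hz'; exact hkey y hy y0 hy0 z hz hz'
        · intro z hz; by_contra hz'; exact hkey y0 hy0 y hy z hz hz'
      exact le_trans (Finset.card_le_card hsubQ) (critClass_card_le G k h2 y0)
    have hSsplit : Sstar ⊆ Uns ∪ Sep.biUnion (fun z => Sstar.filter fun y => G.real z y) := by
      intro y hy
      by_cases h : ∀ z ∈ Sep, ¬ G.real z y
      · refine Finset.mem_union_left _ ?_
        rw [hUnsdef]
        simp only [Finset.mem_filter]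
        exact ⟨hy, h⟩
      · push_neg at h
        obtain ⟨z, hz, hr⟩ := h
        exact Finset.mem_union_right _
          (Finset.mem_biUnion.2 ⟨z, hz, Finset.mem_filter.2 ⟨hy, hr⟩⟩)
    have hSscard : Sstar.card ≤ k + 2 + W.card * k := by
      calc Sstar.card ≤ (Uns ∪ Sep.biUnion (fun z => Sstar.filter fun y => G.real z y)).card :=
            Finset.card_le_card hSsplit
        _ ≤ Uns.card + (Sep.biUnion (fun z => Sstar.filter fun y => G.real z y)).card :=
            Finset.card_union_le _ _
        _ ≤ Uns.card + ∑ z ∈ Sep, (Sstar.filter fun y => G.real z y).card :=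
            Nat.add_le_add_left Finset.card_biUnion_le _
        _ ≤ (k + 2) + ∑ z ∈ Sep, k :=
            Nat.add_le_add hUns_card (Finset.sum_le_sum hSepk)
        _ = (k + 2) + Sep.card * k := by rw [Finset.sum_const, smul_eq_mul]
        _ ≤ (k + 2) + W.card * k :=
            Nat.add_le_add_left (Nat.mul_le_mul_right k (Finset.card_le_card hSepW)) _
    have hCsplit : C ⊆ (C ∩ A) ∪ W ∪ Sstar := by
      intro x hx
      simp only [Finset.mem_union, Finset.mem_inter]
      by_cases hxA : x ∈ A
      · exact Or.inl (Or.inl ⟨hx, hxA⟩)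
      by_cases hxW : x ∈ W
      · exact Or.inl (Or.inr hxW)
      · exact Or.inr (Finset.mem_sdiff.2 ⟨Finset.mem_sdiff.2 ⟨hx, hxA⟩, hxW⟩)
    have hmW : m ≤ a + W.card + Sstar.card := by
      have u1 := Finset.card_le_card hCsplit
      have u2 := Finset.card_union_le ((C ∩ A) ∪ W) Sstar
      have u3 := Finset.card_union_le (C ∩ A) W
      omega
    have hDW : D ≤ W.card * k + W.card := by
      have := hSscard
      have := hmW
      have := hDm
      linarith
    have hCne : C.Nonempty := 𝒞.nonempty_of_mem_parts hC
    have hdegtot : ∑ w ∈ C, degC w ≤ 2 * d * (m - 1) := fuzzy_degsum_le G d σ hσ C hCne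
    have hWD : W.card * D ≤ 4 * d * (m - 1) := by
      calc W.card * D = ∑ _w ∈ W, D := by rw [Finset.sum_const, smul_eq_mul]
        _ ≤ ∑ w ∈ W, 2 * degC w := by
            apply Finset.sum_le_sum
            intro w hw
            rw [hWdef] at hw
            exact (Finset.mem_filter.1 hw).2
        _ ≤ ∑ w ∈ C, 2 * degC w := Finset.sum_le_sum_of_subset hWsub
        _ = 2 * ∑ w ∈ C, degC w := by rw [Finset.mul_sum]
        _ ≤ 2 * (2 * d * (m - 1)) := Nat.mul_le_mul_left 2 hdegtot
        _ = 4 * d * (m - 1) := by ring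
    have hm1 : m - 1 = D + (k + a + 1) := by omega
    have hDsq : D * D ≤ 4 * d * (k + 1) * (D + (k + a + 1)) := by
      calc D * D ≤ (W.card * k + W.card) * D := Nat.mul_le_mul_right D hDW
        _ = (k + 1) * (W.card * D) := by ring
        _ ≤ (k + 1) * (4 * d * (m - 1)) := Nat.mul_le_mul_left (k + 1) hWD
        _ = 4 * d * (k + 1) * (D + (k + a + 1)) := by rw [hm1]; ring
    obtain ⟨E, hE⟩ : ∃ E, D = 4 * d * (k + 1) + (k + a + 1) + 1 + E :=
      ⟨D - (4 * d * (k + 1) + (k + a + 1) + 1), by omega⟩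
    rw [hE] at hDsq
    nlinarith [hDsq, hd, hk]
  -- assembly
  have hAsplit : ∑ C ∈ 𝒞.parts, (C ∩ A).card = A.card := by
    rw [← Finset.card_biUnion]
    · congr 1
      apply Finset.Subset.antisymm
      · intro x hx
        obtain ⟨C, _, hxC⟩ := Finset.mem_biUnion.1 hx
        exact (Finset.mem_inter.1 hxC).2
      · intro x hx
        obtain ⟨C, hC, hxC⟩ := 𝒞.exists_mem (Finset.mem_univ x)
        exact Finset.mem_biUnion.2 ⟨C, hC, Finset.mem_inter.2 ⟨hxC, hx⟩⟩
    · intro x hx y hy hxy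
      exact Disjoint.mono Finset.inter_subset_left Finset.inter_subset_left
        (𝒞.disjoint hx hy hxy)
  have hc_le : 𝒞.parts.card ≤ A.card := by
    calc 𝒞.parts.card = ∑ _C ∈ 𝒞.parts, 1 := by simp
      _ ≤ ∑ C ∈ 𝒞.parts, (C ∩ A).card :=
        Finset.sum_le_sum (fun C hC => Nat.one_le_iff_ne_zero.2
          (Finset.card_ne_zero_of_mem (hmeet C hC).choose_spec))
      _ = A.card := hAsplit
  have hncard : Fintype.card V = ∑ C ∈ 𝒞.parts, C.card := by
    rw [𝒞.sum_card_parts, Finset.card_univ]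
  rw [hncard]
  have hstep : ∑ C ∈ 𝒞.parts, C.card ≤
      𝒞.parts.card * (4*d*(k+1) + 2*k + 3) + 2 * A.card := by
    calc ∑ C ∈ 𝒞.parts, C.card
        ≤ ∑ C ∈ 𝒞.parts, (4*d*(k+1) + 2*k + 3 + 2*(C ∩ A).card) := by
          apply Finset.sum_le_sum
          intro C hC
          have := hcluster C hC
          omega
      _ = 𝒞.parts.card * (4*d*(k+1) + 2*k + 3) + 2 * ∑ C ∈ 𝒞.parts, (C ∩ A).card := by
          rw [Finset.sum_add_distrib, Finset.sum_const, smul_eq_mul, Finset.mul_sum]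
      _ = 𝒞.parts.card * (4*d*(k+1) + 2*k + 3) + 2 * A.card := by rw [hAsplit]
  have hfinal : 𝒞.parts.card * (4*d*(k+1) + 2*k + 3) + 2 * A.card ≤ 30 * k^3 * d := by
    have h2k : 𝒞.parts.card ≤ 2 * k := le_trans hc_le hAcard
    have step1 : 𝒞.parts.card * (4*d*(k+1) + 2*k + 3) + 2 * A.card ≤
        2*k * (4*d*(k+1) + 2*k + 3) + 2 * (2*k) :=
      add_le_add (Nat.mul_le_mul_right _ h2k) (Nat.mul_le_mul_left _ hAcard)
    refine le_trans step1 ?_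
    have hk23 : k^2 ≤ k^3 := Nat.pow_le_pow_right hk (by omega)
    have hk13 : k ≤ k^3 := by
      calc k = k^1 := (pow_one k).symm
        _ ≤ k^3 := Nat.pow_le_pow_right hk (by omega)
    nlinarith [mul_le_mul_right hk23 (8*d), mul_le_mul_right hk13 (8*d),
      mul_le_mul_right hk23 4, mul_le_mul_right hk13 10,
      mul_le_mul_right hd (14*k^3), hd, hk]
  exact le_trans hstep hfinal
end

section
/- Let G = (V, E⁺, E⁰) be a fuzzy graph with weight function ω that is fuzzy c-closed, and let k ≥ 1, c ≥ 1 be integers. Assume: (i) every vertex of V has fewer than c fuzzy neighbors or at most 2kc real neighbors; (ii) there is no pair with {u,v} ∈ E⁻ and |N⁺(u) ∩ N⁺(v)| > k; (iii) there is no fuzzy edge {u,v} with |N⁰(u) ∩ N⁰(v)| < c and |N⁺(u) ∩ N⁺(v)| > k; (iv) there is no clique in G⁽⁺⁾ with at least 3kc + 2 vertices; (v) there is no nonempty clique K in G⁽⁺⁾ together with a set X of more than 2k + c + 1 vertices that is a clique in G⁽⁰⁾ and satisfies N⁺(v) = K for every v ∈ X. Let 𝒞 be a clustering of G of cost at most k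 and let C ∈ 𝒞 be a cluster that induces a connected subgraph of G⁽⁺⁾. Then |C| ≤ 3kc² + 3kc + 3k + 3c + 3. -/
open Finset

namespace FuzzyGraph

variable {V : Type*} [Fintype V] [DecidableEq V] {G : FuzzyGraph V}

omit [Fintype V] [DecidableEq V] in
lemma real_symm' {u v : V} (h : G.real u v) : G.real v u := by
  rw [G.real_symm v u]; exact h

omit [Fintype V] [DecidableEq V] in
lemma fuzzy_symm' {u v : V} (h : G.fuzzy u v) : G.fuzzy v u := by
  rw [G.fuzzy_symm v u]; exact h

omit [Fintype V] [DecidableEq V] in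
lemma ne_of_real {u v : V} (h : G.real u v) : u ≠ v := by
  rintro rfl; rw [G.real_irrefl] at h; exact Bool.noConfusion h

omit [Fintype V] [DecidableEq V] in
lemma not_fuzzy_of_real {u v : V} (h : G.real u v) : ¬ G.fuzzy u v :=
  fun hf => G.not_real_and_fuzzy u v ⟨h, hf⟩

omit [Fintype V] [DecidableEq V] in
lemma trichotomy {u v : V} (h : u ≠ v) : G.real u v ∨ G.fuzzy u v ∨ G.nonedge u v := by
  by_cases hr : G.real u v
  · exact Or.inl hr
  by_cases hf : G.fuzzy u v
  · exact Or.inr (Or.inl hf)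
  exact Or.inr (Or.inr ⟨h, hr, hf⟩)

omit [DecidableEq V] in
lemma mem_realNbrs' {u v : V} : v ∈ G.realNbrs u ↔ G.real u v := by
  simp [realNbrs]

omit [DecidableEq V] in
lemma mem_fuzzyNbrs' {u v : V} : v ∈ G.fuzzyNbrs u ↔ G.fuzzy u v := by
  simp [fuzzyNbrs]

end FuzzyGraph

/-- Under the stated reducedness conditions on a fuzzy `c`-closed graph,
every cluster of a clustering of cost at most `k` that induces a connected subgraph of
`G⁽⁺⁾` has at most `3kc² + 3kc + 3k + 3c + 3` vertices. -/
theorem stmt11 {V : Type*} [Fintype V] [DecidableEq V]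
    (G : FuzzyGraph V) (ω : V → V → ℕ) (hω : IsWeight G ω) (c k : ℕ) (hk : 1 ≤ k) (hc : 1 ≤ c)
    (hcl : FuzzyCClosed G c)
    (h1 : ∀ v : V, (G.fuzzyNbrs v).card < c ∨ (G.realNbrs v).card ≤ 2 * k * c)
    (h2 : ∀ u v : V, G.nonedge u v → ((G.realNbrs u) ∩ (G.realNbrs v)).card ≤ k)
    (h3 : ∀ u v : V, G.fuzzy u v → ((G.fuzzyNbrs u) ∩ (G.fuzzyNbrs v)).card < c →
      ((G.realNbrs u) ∩ (G.realNbrs v)).card ≤ k)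
    (h4 : ∀ K : Finset V, IsRealClique G K → K.card < 3 * k * c + 2)
    (h5 : ∀ K X : Finset V, K.Nonempty → IsRealClique G K → IsFuzzyClique G X →
      (∀ v ∈ X, G.realNbrs v = K) → X.card ≤ 2 * k + c + 1)
    (𝒞 : Finpartition (Finset.univ : Finset V)) (hcost : cost G ω 𝒞 ≤ k)
    (C : Finset V) (hC : C ∈ 𝒞.parts)
    (hconn : (SimpleGraph.induce (↑C : Set V) G.plus).Connected) :
    C.card ≤ 3 * k * c ^ 2 + 3 * k * c + 3 * k + 3 * c + 3 := by
  classical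
  by_contra hbig
  push_neg at hbig
  obtain ⟨hωsymm, hω0⟩ := hω
  -- auxiliary product facts
  have hkc : k ≤ k * c := Nat.le_mul_of_pos_right k hc
  have hkc2 : k ≤ k * c ^ 2 := by nlinarith
  have hkcc : k * c ≤ k * c ^ 2 := by nlinarith
  -- cost extraction
  have hsum : (∑ e ∈ univ.offDiag,
      ((if G.real e.1 e.2 ∧ ¬together 𝒞 e.1 e.2 then ω e.1 e.2 else 0) +
       (if G.nonedge e.1 e.2 ∧ together 𝒞 e.1 e.2 then ω e.1 e.2 else 0))) ≤ 2 * k + 1 := by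
    have h2 : (∑ e ∈ univ.offDiag,
      ((if G.real e.1 e.2 ∧ ¬together 𝒞 e.1 e.2 then ω e.1 e.2 else 0) +
       (if G.nonedge e.1 e.2 ∧ together 𝒞 e.1 e.2 then ω e.1 e.2 else 0))) / 2 ≤ k := hcost
    omega
  set Pn := univ.offDiag.filter (fun e : V × V => G.nonedge e.1 e.2 ∧ e.1 ∈ C ∧ e.2 ∈ C)
    with hPndef
  set Pc := univ.offDiag.filter
      (fun e : V × V => G.real e.1 e.2 ∧ ((e.1 ∈ C ∧ e.2 ∉ C) ∨ (e.1 ∉ C ∧ e.2 ∈ C)))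
    with hPcdef
  have hnotog : ∀ a b : V, a ∈ C → b ∉ C → ¬ together 𝒞 a b := by
    rintro a b ha hb ⟨C', hC', ha', hb'⟩
    have hCC : C' = C := by
      by_contra hne
      exact (Finset.disjoint_left.1 (𝒞.disjoint hC' hC hne)) ha' ha
    exact hb (hCC ▸ hb')
  have htog : ∀ a b : V, a ∈ C → b ∈ C → together 𝒞 a b := fun a b ha hb => ⟨C, hC, ha, hb⟩
  have hPnPc : Pn.card + Pc.card ≤ 2 * k + 1 := by
    have hdisj : Disjoint Pn Pc := by
      rw [Finset.disjoint_left]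
      intro e h1' h2'
      have hn := (Finset.mem_filter.1 h1').2.1
      have hr := (Finset.mem_filter.1 h2').2.1
      exact hn.2.1 hr
    have hone : ∀ e ∈ Pn ∪ Pc, 1 ≤
        ((if G.real e.1 e.2 ∧ ¬together 𝒞 e.1 e.2 then ω e.1 e.2 else 0) +
         (if G.nonedge e.1 e.2 ∧ together 𝒞 e.1 e.2 then ω e.1 e.2 else 0)) := by
      intro e he
      rcases Finset.mem_union.1 he with h | h
      · obtain ⟨hoff, hne, h1', h2'⟩ := Finset.mem_filter.1 h
        have hg : (if G.nonedge e.1 e.2 ∧ together 𝒞 e.1 e.2 then ω e.1 e.2 else 0)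
            = ω e.1 e.2 := if_pos ⟨hne, htog _ _ h1' h2'⟩
        rw [hg]
        have hω1 : ω e.1 e.2 ≠ 0 := fun h0 => hne.2.2 ((hω0 _ _ hne.1).1 h0)
        omega
      · obtain ⟨hoff, hre, hcond⟩ := Finset.mem_filter.1 h
        have hnt : ¬ together 𝒞 e.1 e.2 := by
          rcases hcond with ⟨h1', h2'⟩ | ⟨h1', h2'⟩
          · exact hnotog _ _ h1' h2'
          · intro ht
            obtain ⟨C', hC', ha', hb'⟩ := ht
            exact hnotog _ _ h2' h1' ⟨C', hC', hb', ha'⟩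
        have hg : (if G.real e.1 e.2 ∧ ¬together 𝒞 e.1 e.2 then ω e.1 e.2 else 0)
            = ω e.1 e.2 := if_pos ⟨hre, hnt⟩
        rw [hg]
        have hne12 : e.1 ≠ e.2 := (Finset.mem_offDiag.1 hoff).2.2
        have hω1 : ω e.1 e.2 ≠ 0 := fun h0 =>
          (G.not_fuzzy_of_real hre) ((hω0 _ _ hne12).1 h0)
        omega
    calc Pn.card + Pc.card = (Pn ∪ Pc).card := (Finset.card_union_of_disjoint hdisj).symm
      _ = ∑ _e ∈ Pn ∪ Pc, 1 := by rw [Finset.sum_const, smul_eq_mul, mul_one]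
      _ ≤ ∑ e ∈ Pn ∪ Pc,
          ((if G.real e.1 e.2 ∧ ¬together 𝒞 e.1 e.2 then ω e.1 e.2 else 0) +
           (if G.nonedge e.1 e.2 ∧ together 𝒞 e.1 e.2 then ω e.1 e.2 else 0)) :=
        Finset.sum_le_sum hone
      _ ≤ ∑ e ∈ univ.offDiag,
          ((if G.real e.1 e.2 ∧ ¬together 𝒞 e.1 e.2 then ω e.1 e.2 else 0) +
           (if G.nonedge e.1 e.2 ∧ together 𝒞 e.1 e.2 then ω e.1 e.2 else 0)) :=
        Finset.sum_le_sum_of_subset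
          (Finset.union_subset (Finset.filter_subset _ _) (Finset.filter_subset _ _))
      _ ≤ 2 * k + 1 := hsum
  -- the set D of vertices incident to a nonedge inside C
  set D := C.filter (fun u => ∃ w ∈ C, G.nonedge u w) with hDdef
  set C' := C \ D with hC'def
  have hDsub : D ⊆ C := Finset.filter_subset _ _
  have hmeq : C'.card + D.card = C.card := Finset.card_sdiff_add_card_eq_card hDsub
  have hDPn : D.card ≤ Pn.card := by
    have hsub : D ⊆ Pn.image Prod.fst := by
      intro u hu
      obtain ⟨huC, w, hwC, hne⟩ := Finset.mem_filter.1 hu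
      exact Finset.mem_image.2 ⟨(u, w), Finset.mem_filter.2
        ⟨Finset.mem_offDiag.2 ⟨Finset.mem_univ _, Finset.mem_univ _, hne.1⟩, hne, huC, hwC⟩, rfl⟩
    exact le_trans (Finset.card_le_card hsub) Finset.card_image_le
  -- cut vertices
  set cv := C.filter (fun u => ∃ w, w ∉ C ∧ G.real u w) with hcvdef
  have hcvk : cv.card ≤ k := by
    have h12 : (Pc.filter (fun e => e.1 ∈ C)).card +
        (Pc.filter (fun e => ¬ e.1 ∈ C)).card = Pc.card :=
      Finset.card_filter_add_card_filter_not _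
    have hcv1 : cv ⊆ (Pc.filter (fun e => e.1 ∈ C)).image Prod.fst := by
      intro u hu
      obtain ⟨huC, w, hwC, hre⟩ := Finset.mem_filter.1 hu
      refine Finset.mem_image.2 ⟨(u, w), Finset.mem_filter.2 ⟨Finset.mem_filter.2
        ⟨Finset.mem_offDiag.2 ⟨Finset.mem_univ _, Finset.mem_univ _, G.ne_of_real hre⟩,
          hre, Or.inl ⟨huC, hwC⟩⟩, huC⟩, rfl⟩
    have hcv2 : cv ⊆ (Pc.filter (fun e => ¬ e.1 ∈ C)).image Prod.snd := by
      intro u hu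
      obtain ⟨huC, w, hwC, hre⟩ := Finset.mem_filter.1 hu
      refine Finset.mem_image.2 ⟨(w, u), Finset.mem_filter.2 ⟨Finset.mem_filter.2
        ⟨Finset.mem_offDiag.2 ⟨Finset.mem_univ _, Finset.mem_univ _,
          (G.ne_of_real hre).symm⟩, G.real_symm' hre, Or.inr ⟨hwC, huC⟩⟩, hwC⟩, rfl⟩
    have h1' := le_trans (Finset.card_le_card hcv1) Finset.card_image_le
    have h2' := le_trans (Finset.card_le_card hcv2) Finset.card_image_le
    omega
  have hC'C : C' ⊆ C := Finset.sdiff_subset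
  have hC'no : ∀ u ∈ C', ∀ w ∈ C, ¬ G.nonedge u w := by
    intro u hu w hw hne
    have hm := Finset.mem_sdiff.1 hu
    exact hm.2 (Finset.mem_filter.2 ⟨hm.1, w, hw, hne⟩)
  have hrf : ∀ u ∈ C', ∀ w ∈ C, u ≠ w → G.real u w ∨ G.fuzzy u w := by
    intro u hu w hw hne
    rcases G.trichotomy hne with h | h | h
    · exact Or.inl h
    · exact Or.inr h
    · exact absurd h (hC'no u hu w hw)
  have hm : 3 * k * c ^ 2 + 3 * k * c + k + 3 * c + 3 ≤ C'.card := by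
    have hD2 : D.card ≤ 2 * k + 1 := le_trans hDPn (by omega)
    linarith
  -- A: low fuzzy degree vertices of C'; they form a real clique
  set A := C'.filter (fun u => (G.fuzzyNbrs u).card < c) with hAdef
  set B1 := C' \ A with hB1def
  have hAsub : A ⊆ C' := Finset.filter_subset _ _
  have hB1sub : B1 ⊆ C' := Finset.sdiff_subset
  have hAB : B1.card + A.card = C'.card := Finset.card_sdiff_add_card_eq_card hAsub
  have hAclique : IsRealClique G A := by
    intro u hu v hv huv
    by_contra hr
    have hfu : (G.fuzzyNbrs u).card < c := (Finset.mem_filter.1 hu).2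
    have hfz : G.fuzzy u v := by
      rcases hrf u (hAsub hu) v (hC'C (hAsub hv)) huv with h | h
      · exact absurd h hr
      · exact h
    have hcom : ((G.fuzzyNbrs u) ∩ (G.fuzzyNbrs v)).card < c :=
      lt_of_le_of_lt (Finset.card_le_card Finset.inter_subset_left) hfu
    have hk3 := h3 u v hfz hcom
    set S := C' \ (insert u (insert v (G.fuzzyNbrs u ∪ G.fuzzyNbrs v))) with hSdef
    have hSsub : S ⊆ G.realNbrs u ∩ G.realNbrs v := by
      intro z hz
      obtain ⟨hzC', hz2⟩ := Finset.mem_sdiff.1 hz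
      simp only [Finset.mem_insert, Finset.mem_union, not_or] at hz2
      obtain ⟨hzu, hzv, hzfu, hzfv⟩ := hz2
      have hru : G.real u z := by
        rcases hrf u (hAsub hu) z (hC'C hzC') (fun h => hzu (h.symm)) with h | h
        · exact h
        · exact absurd (FuzzyGraph.mem_fuzzyNbrs'.2 h) hzfu
      have hrv : G.real v z := by
        rcases hrf v (hAsub hv) z (hC'C hzC') (fun h => hzv (h.symm)) with h | h
        · exact h
        · exact absurd (FuzzyGraph.mem_fuzzyNbrs'.2 h) hzfv
      exact Finset.mem_inter.2 ⟨FuzzyGraph.mem_realNbrs'.2 hru, FuzzyGraph.mem_realNbrs'.2 hrv⟩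
    have hTcard : (insert u (insert v (G.fuzzyNbrs u ∪ G.fuzzyNbrs v))).card ≤ 2 * c := by
      have hfv : (G.fuzzyNbrs v).card < c := (Finset.mem_filter.1 hv).2
      have := Finset.card_union_le (G.fuzzyNbrs u) (G.fuzzyNbrs v)
      have h1' := Finset.card_insert_le v (G.fuzzyNbrs u ∪ G.fuzzyNbrs v)
      have h2' := Finset.card_insert_le u (insert v (G.fuzzyNbrs u ∪ G.fuzzyNbrs v))
      omega
    have hSlow : C'.card - (insert u (insert v (G.fuzzyNbrs u ∪ G.fuzzyNbrs v))).card ≤ S.card :=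
      Finset.le_card_sdiff _ _
    have hfin : k + 1 ≤ (G.realNbrs u ∩ G.realNbrs v).card := by
      have hle := Finset.card_le_card hSsub
      have hS2 : C'.card ≤ S.card + 2 * c := by omega
      linarith
    linarith
  have hA : A.card ≤ 3 * k * c + 1 := by
    have := h4 A hAclique; omega
  -- B1: high fuzzy degree, hence low real degree; B1 is a fuzzy clique
  have hB1deg : ∀ u ∈ B1, (G.realNbrs u).card ≤ 2 * k * c := by
    intro u hu
    have hm2 := Finset.mem_sdiff.1 hu
    rcases h1 u with h | h
    · exact absurd (Finset.mem_filter.2 ⟨hm2.1, h⟩) hm2.2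
    · exact h
  have hB1f : ∀ u ∈ B1, ∀ v ∈ B1, u ≠ v → G.fuzzy u v := by
    intro u hu v hv huv
    by_contra hfz
    have hcl' := hcl u v huv hfz
    set S := C' \ (insert u (insert v (G.realNbrs u ∪ G.realNbrs v))) with hSdef
    have hSsub : S ⊆ G.fuzzyNbrs u ∩ G.fuzzyNbrs v := by
      intro z hz
      obtain ⟨hzC', hz2⟩ := Finset.mem_sdiff.1 hz
      simp only [Finset.mem_insert, Finset.mem_union, not_or] at hz2
      obtain ⟨hzu, hzv, hzru, hzrv⟩ := hz2
      have hfu' : G.fuzzy u z := by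
        rcases hrf u (hB1sub hu) z (hC'C hzC') (fun h => hzu (h.symm)) with h | h
        · exact absurd (FuzzyGraph.mem_realNbrs'.2 h) hzru
        · exact h
      have hfv' : G.fuzzy v z := by
        rcases hrf v (hB1sub hv) z (hC'C hzC') (fun h => hzv (h.symm)) with h | h
        · exact absurd (FuzzyGraph.mem_realNbrs'.2 h) hzrv
        · exact h
      exact Finset.mem_inter.2 ⟨FuzzyGraph.mem_fuzzyNbrs'.2 hfu', FuzzyGraph.mem_fuzzyNbrs'.2 hfv'⟩
    have hTcard : (insert u (insert v (G.realNbrs u ∪ G.realNbrs v))).card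
        ≤ 2 + 2 * (2 * k * c) := by
      have h1' := hB1deg u hu
      have h2' := hB1deg v hv
      have := Finset.card_union_le (G.realNbrs u) (G.realNbrs v)
      have h3' := Finset.card_insert_le v (G.realNbrs u ∪ G.realNbrs v)
      have h4' := Finset.card_insert_le u (insert v (G.realNbrs u ∪ G.realNbrs v))
      omega
    have hSlow : C'.card - (insert u (insert v (G.realNbrs u ∪ G.realNbrs v))).card ≤ S.card :=
      Finset.le_card_sdiff _ _
    have hfin : c ≤ (G.fuzzyNbrs u ∩ G.fuzzyNbrs v).card := by
      have hle := Finset.card_le_card hSsub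
      have hS2 : C'.card ≤ S.card + (2 + 2 * (2 * k * c)) := by omega
      linarith [hkcc]
    linarith
  -- B2: members of B1 with all real neighbors inside C
  set B2 := B1.filter (fun u => G.realNbrs u ⊆ C) with hB2def
  have hB2sub : B2 ⊆ B1 := Finset.filter_subset _ _
  have hB12 : (B1 \ B2).card + B2.card = B1.card := Finset.card_sdiff_add_card_eq_card hB2sub
  have hB12cv : B1 \ B2 ⊆ cv := by
    intro u hu
    obtain ⟨hu1, hu2⟩ := Finset.mem_sdiff.1 hu
    have hns : ¬ G.realNbrs u ⊆ C := fun hs => hu2 (Finset.mem_filter.2 ⟨hu1, hs⟩)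
    obtain ⟨w, hw1, hw2⟩ := Finset.not_subset.1 hns
    exact Finset.mem_filter.2 ⟨hC'C (hB1sub hu1), w, hw2, FuzzyGraph.mem_realNbrs'.1 hw1⟩
  have hB2C : B2 ⊆ C := fun u hu => hC'C (hB1sub (hB2sub hu))
  have hB2lb : 3 * k * c ^ 2 + 3 * c + 2 ≤ B2.card := by
    have h1' : (B1 \ B2).card ≤ k := le_trans (Finset.card_le_card hB12cv) hcvk
    linarith
  -- W: vertices of C outside B2 with a real neighbor in B2
  set W := C.filter (fun x => x ∉ B2 ∧ ∃ u ∈ B2, G.real x u) with hWdef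
  -- nonedge counts from W-vertices into B2 are at most k
  have hnset : ∀ x ∈ W, (B2.filter (fun w => G.nonedge x w)).card ≤ k := by
    intro x hx
    have hxB2 : x ∉ B2 := (Finset.mem_filter.1 hx).2.1
    have hxC : x ∈ C := (Finset.mem_filter.1 hx).1
    set L := Pn.filter (fun e => e.1 = x ∧ e.2 ∈ B2) with hLdef
    set R := Pn.filter (fun e => e.1 ∈ B2 ∧ e.2 = x) with hRdef
    have hLcard : (B2.filter (fun w => G.nonedge x w)).card = L.card := by
      apply Finset.card_bij (fun w _ => (x, w))
      · intro w hw
        obtain ⟨hwB2, hnw⟩ := Finset.mem_filter.1 hw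
        exact Finset.mem_filter.2 ⟨Finset.mem_filter.2
          ⟨Finset.mem_offDiag.2 ⟨Finset.mem_univ _, Finset.mem_univ _, hnw.1⟩,
            hnw, hxC, hB2C hwB2⟩, rfl, hwB2⟩
      · intro w1 h1' w2 h2' he
        simpa using he
      · intro e he
        obtain ⟨hePn, he1, he2⟩ := Finset.mem_filter.1 he
        refine ⟨e.2, Finset.mem_filter.2 ⟨he2, ?_⟩, by rw [← he1]⟩
        have := (Finset.mem_filter.1 hePn).2.1
        rwa [he1] at this
    have hRcard : R.card = L.card := by
      apply Finset.card_bij (fun e _ => (e.2, e.1))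
      · intro e he
        obtain ⟨hePn, he1, he2⟩ := Finset.mem_filter.1 he
        obtain ⟨hoff, hne, hc1, hc2⟩ := Finset.mem_filter.1 hePn
        exact Finset.mem_filter.2 ⟨Finset.mem_filter.2
          ⟨Finset.mem_offDiag.2 ⟨Finset.mem_univ _, Finset.mem_univ _, hne.1.symm⟩,
            ⟨hne.1.symm, fun h => hne.2.1 (G.real_symm' h),
              fun h => hne.2.2 (G.fuzzy_symm' h)⟩, hc2, hc1⟩, he2, he1⟩
      · intro e1 h1' e2 h2' he
        obtain ⟨h9, h10⟩ := Prod.ext_iff.1 he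
        exact Prod.ext_iff.2 ⟨h10, h9⟩
      · intro e he
        obtain ⟨hePn, he1, he2⟩ := Finset.mem_filter.1 he
        obtain ⟨hoff, hne, hc1, hc2⟩ := Finset.mem_filter.1 hePn
        refine ⟨(e.2, e.1), Finset.mem_filter.2 ⟨Finset.mem_filter.2
          ⟨Finset.mem_offDiag.2 ⟨Finset.mem_univ _, Finset.mem_univ _, hne.1.symm⟩,
            ⟨hne.1.symm, fun h => hne.2.1 (G.real_symm' h),
              fun h => hne.2.2 (G.fuzzy_symm' h)⟩, hc2, hc1⟩, he2, he1⟩, rfl⟩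
    have hLR : Disjoint L R := by
      rw [Finset.disjoint_left]
      intro e h1' h2'
      have ha := (Finset.mem_filter.1 h1').2.1
      have hb := (Finset.mem_filter.1 h2').2.1
      exact hxB2 (ha ▸ hb)
    have hsum' : L.card + R.card ≤ Pn.card := by
      rw [← Finset.card_union_of_disjoint hLR]
      exact Finset.card_le_card
        (Finset.union_subset (Finset.filter_subset _ _) (Finset.filter_subset _ _))
    omega
  -- fuzzy counts from W-vertices into B2 are at most c - 1
  have hbad : ∀ x ∈ W, (B2.filter (fun w => G.fuzzy x w)).card ≤ c - 1 := by
    intro x hx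
    obtain ⟨hxC, hxB2, u, huB2, hxu⟩ := Finset.mem_filter.1 hx
    have hxune : x ≠ u := G.ne_of_real hxu
    have hnf : ¬ G.fuzzy x u := G.not_fuzzy_of_real hxu
    have hsub : B2.filter (fun w => G.fuzzy x w) ⊆ G.fuzzyNbrs x ∩ G.fuzzyNbrs u := by
      intro w hw
      obtain ⟨hwB2, hfw⟩ := Finset.mem_filter.1 hw
      have hwu : w ≠ u := by rintro rfl; exact hnf hfw
      exact Finset.mem_inter.2 ⟨FuzzyGraph.mem_fuzzyNbrs'.2 hfw,
        FuzzyGraph.mem_fuzzyNbrs'.2 (hB1f u (hB2sub huB2) w (hB2sub hwB2) hwu.symm)⟩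
    have := hcl x u hxune hnf
    have := Finset.card_le_card hsub
    omega
  -- each W-vertex is really adjacent to most of B2
  have hrealset : ∀ x ∈ W,
      B2.card ≤ (B2.filter (fun w => G.real x w)).card + (c - 1) + k := by
    intro x hx
    have hxB2 : x ∉ B2 := (Finset.mem_filter.1 hx).2.1
    have hcover : B2 ⊆ (B2.filter (fun w => G.real x w)) ∪
        ((B2.filter (fun w => G.fuzzy x w)) ∪ (B2.filter (fun w => G.nonedge x w))) := by
      intro w hw
      have hxw : x ≠ w := fun h => hxB2 (h ▸ hw)
      rcases G.trichotomy hxw with h | h | h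
      · exact Finset.mem_union_left _ (Finset.mem_filter.2 ⟨hw, h⟩)
      · exact Finset.mem_union_right _
          (Finset.mem_union_left _ (Finset.mem_filter.2 ⟨hw, h⟩))
      · exact Finset.mem_union_right _
          (Finset.mem_union_right _ (Finset.mem_filter.2 ⟨hw, h⟩))
    have h1' := Finset.card_le_card hcover
    have h2' := Finset.card_union_le (B2.filter (fun w => G.real x w))
      ((B2.filter (fun w => G.fuzzy x w)) ∪ (B2.filter (fun w => G.nonedge x w)))
    have h3' := Finset.card_union_le (B2.filter (fun w => G.fuzzy x w))
      (B2.filter (fun w => G.nonedge x w))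
    have h4' := hbad x hx
    have h5' := hnset x hx
    omega
  -- W is a real clique
  have hWclique : IsRealClique G W := by
    intro x hx y hy hxy
    by_contra hr
    have key : k + 1 ≤ ((G.realNbrs x) ∩ (G.realNbrs y)).card := by
      have hx' := hrealset x hx
      have hy' := hrealset y hy
      set rx := B2.filter (fun w => G.real x w) with hrxdef
      set ry := B2.filter (fun w => G.real y w) with hrydef
      have hsub : rx ∩ ry ⊆ G.realNbrs x ∩ G.realNbrs y := by
        intro w hw
        obtain ⟨hw1, hw2⟩ := Finset.mem_inter.1 hw
        exact Finset.mem_inter.2 ⟨FuzzyGraph.mem_realNbrs'.2 (Finset.mem_filter.1 hw1).2,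
          FuzzyGraph.mem_realNbrs'.2 (Finset.mem_filter.1 hw2).2⟩
      have hiu := Finset.card_union_add_card_inter rx ry
      have hun : (rx ∪ ry).card ≤ B2.card := Finset.card_le_card
        (Finset.union_subset (Finset.filter_subset _ _) (Finset.filter_subset _ _))
      have hle := Finset.card_le_card hsub
      have hcm1 : c - 1 + 1 = c := Nat.sub_add_cancel hc
      -- rx∩ry ≥ 2(B2 - (c-1) - k) - B2 = B2 - 2(c-1) - 2k ≥ k+1
      -- B2 ≥ 3kc² + 3c + 2 and 3k ≤ 3kc²
      linarith
    rcases G.trichotomy hxy with h | h | h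
    · exact hr h
    · -- fuzzy case: x has high real degree, hence low fuzzy degree; contradict h3
      have hrsub : B2.filter (fun w => G.real x w) ⊆ G.realNbrs x := by
        intro w hw
        exact FuzzyGraph.mem_realNbrs'.2 (Finset.mem_filter.1 hw).2
      have hdx : 2 * k * c + 1 ≤ (G.realNbrs x).card := by
        have h1' := Finset.card_le_card hrsub
        have h2' := hrealset x hx
        have hcm1 : c - 1 + 1 = c := Nat.sub_add_cancel hc
        -- B2 ≥ 3kc²+3c+2, realNbrs x ≥ B2 - (c-1) - k ≥ 2kc+1
        have hkcc2 : 2 * (k * c) ≤ 2 * (k * c ^ 2) := by omega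
        linarith
      have hfx : (G.fuzzyNbrs x).card < c := by
        rcases h1 x with h' | h'
        · exact h'
        · omega
      have hcom : ((G.fuzzyNbrs x) ∩ (G.fuzzyNbrs y)).card < c :=
        lt_of_le_of_lt (Finset.card_le_card Finset.inter_subset_left) hfx
      have := h3 x y h hcom
      omega
    · have := h2 x y h
      omega
  have hW : W.card ≤ 3 * k * c + 1 := by
    have := h4 W hWclique; omega
  -- X: vertices of B2 whose real neighborhood is exactly W
  set X := B2.filter (fun u => G.realNbrs u = W) with hXdef
  have hXsub : X ⊆ B2 := Finset.filter_subset _ _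
  have hB2X : (B2 \ X).card + X.card = B2.card := Finset.card_sdiff_add_card_eq_card hXsub
  have hNsubW : ∀ u ∈ B2, G.realNbrs u ⊆ W := by
    intro u hu x hxmem
    have hux : G.real u x := FuzzyGraph.mem_realNbrs'.1 hxmem
    have hxC : x ∈ C := (Finset.mem_filter.1 hu).2 hxmem
    have hxB2 : x ∉ B2 := by
      intro hxB2
      have : G.fuzzy u x := hB1f u (hB2sub hu) x (hB2sub hxB2) (G.ne_of_real hux)
      exact G.not_real_and_fuzzy u x ⟨hux, this⟩
    exact Finset.mem_filter.2 ⟨hxC, hxB2, u, hu, G.real_symm' hux⟩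
  -- total nonedge count from W into B2
  set PnW := Pn.filter (fun e => e.1 ∈ W ∧ e.2 ∈ B2) with hPnWdef
  have hPnWk : PnW.card ≤ k := by
    set PnW' := Pn.filter (fun e => e.1 ∈ B2 ∧ e.2 ∈ W) with hPnW'def
    have hswap : PnW'.card = PnW.card := by
      apply Finset.card_bij (fun e _ => (e.2, e.1))
      · intro e he
        obtain ⟨hePn, he1, he2⟩ := Finset.mem_filter.1 he
        obtain ⟨hoff, hne, hc1, hc2⟩ := Finset.mem_filter.1 hePn
        exact Finset.mem_filter.2 ⟨Finset.mem_filter.2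
          ⟨Finset.mem_offDiag.2 ⟨Finset.mem_univ _, Finset.mem_univ _, hne.1.symm⟩,
            ⟨hne.1.symm, fun h => hne.2.1 (G.real_symm' h),
              fun h => hne.2.2 (G.fuzzy_symm' h)⟩, hc2, hc1⟩, he2, he1⟩
      · intro e1 h1' e2 h2' he
        obtain ⟨h9, h10⟩ := Prod.ext_iff.1 he
        exact Prod.ext_iff.2 ⟨h10, h9⟩
      · intro e he
        obtain ⟨hePn, he1, he2⟩ := Finset.mem_filter.1 he
        obtain ⟨hoff, hne, hc1, hc2⟩ := Finset.mem_filter.1 hePn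
        refine ⟨(e.2, e.1), Finset.mem_filter.2 ⟨Finset.mem_filter.2
          ⟨Finset.mem_offDiag.2 ⟨Finset.mem_univ _, Finset.mem_univ _, hne.1.symm⟩,
            ⟨hne.1.symm, fun h => hne.2.1 (G.real_symm' h),
              fun h => hne.2.2 (G.fuzzy_symm' h)⟩, hc2, hc1⟩, he2, he1⟩, rfl⟩
    have hdisj : Disjoint PnW PnW' := by
      rw [Finset.disjoint_left]
      intro e h1' h2'
      have ha := (Finset.mem_filter.1 h1').2.1
      have hb := (Finset.mem_filter.1 h2').2.1
      exact (Finset.mem_filter.1 ha).2.1 hb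
    have hsum' : PnW.card + PnW'.card ≤ Pn.card := by
      rw [← Finset.card_union_of_disjoint hdisj]
      exact Finset.card_le_card
        (Finset.union_subset (Finset.filter_subset _ _) (Finset.filter_subset _ _))
    omega
  have hB2Xcard : (B2 \ X).card ≤ W.card * (c - 1) + k := by
    have hsub : B2 \ X ⊆ (W.biUnion (fun x => B2.filter (fun w => G.fuzzy x w)))
        ∪ PnW.image Prod.snd := by
      intro u hu
      obtain ⟨huB2, huX⟩ := Finset.mem_sdiff.1 hu
      have hne : G.realNbrs u ≠ W := fun h => huX (Finset.mem_filter.2 ⟨huB2, h⟩)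
      obtain ⟨x, hxW, hxN⟩ := Finset.exists_of_ssubset
        (Finset.ssubset_iff_subset_ne.2 ⟨hNsubW u huB2, hne⟩)
      have hxu : ¬ G.real x u := fun h => hxN (FuzzyGraph.mem_realNbrs'.2 (G.real_symm' h))
      have hxune : x ≠ u := fun h => (Finset.mem_filter.1 hxW).2.1 (h ▸ huB2)
      rcases G.trichotomy hxune with h | h | h
      · exact absurd h hxu
      · exact Finset.mem_union_left _
          (Finset.mem_biUnion.2 ⟨x, hxW, Finset.mem_filter.2 ⟨huB2, h⟩⟩)
      · refine Finset.mem_union_right _ (Finset.mem_image.2 ⟨(x, u), ?_, rfl⟩)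
        exact Finset.mem_filter.2 ⟨Finset.mem_filter.2
          ⟨Finset.mem_offDiag.2 ⟨Finset.mem_univ _, Finset.mem_univ _, h.1⟩,
            h, (Finset.mem_filter.1 hxW).1, hB2C huB2⟩, hxW, huB2⟩
    have h1' := Finset.card_le_card hsub
    have h2' := Finset.card_union_le (W.biUnion (fun x => B2.filter (fun w => G.fuzzy x w)))
      (PnW.image Prod.snd)
    have h3' := Finset.card_biUnion_le (s := W) (t := fun x => B2.filter (fun w => G.fuzzy x w))
    have h4' : ∑ x ∈ W, (B2.filter (fun w => G.fuzzy x w)).card ≤ W.card * (c - 1) := by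
      rw [← smul_eq_mul]
      exact Finset.sum_le_card_nsmul W _ (c - 1) (fun x hx => hbad x hx)
    have h5' : (PnW.image Prod.snd).card ≤ PnW.card := Finset.card_image_le
    omega
  -- W is nonempty thanks to connectivity
  have hWne : W.Nonempty := by
    have hB2ne : B2.Nonempty := Finset.card_pos.1 (lt_of_lt_of_le (by positivity) hB2lb)
    obtain ⟨u₀, hu₀⟩ := hB2ne
    have hCu₀ : u₀ ∈ C := hB2C hu₀
    have h2card : 1 < C.card :=
      lt_trans (Nat.lt_of_lt_of_le (by norm_num) (Nat.le_add_left 3 _)) hbig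
    obtain ⟨w, hwC, hwne⟩ := Finset.exists_mem_ne h2card u₀
    have hreach := hconn.preconnected ⟨u₀, by simpa using hCu₀⟩ ⟨w, by simpa using hwC⟩
    obtain ⟨p⟩ := hreach
    have hne' : (⟨u₀, by simpa using hCu₀⟩ : (↑C : Set V)) ≠ ⟨w, by simpa using hwC⟩ := by
      simp only [ne_eq, Subtype.mk.injEq]
      exact fun h => hwne h.symm
    have hnn : ¬ p.Nil := SimpleGraph.Walk.not_nil_of_ne hne'
    have hlen : 0 < p.length := by
      rcases Nat.eq_zero_or_pos p.length with h0 | h0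
      · exact absurd (SimpleGraph.Walk.nil_iff_length_eq.2 h0) hnn
      · exact h0
    have hadj0 := p.adj_getVert_succ (i := 0) hlen
    rw [SimpleGraph.Walk.getVert_zero] at hadj0
    have hadj' : G.real u₀ ((p.getVert 1 : (↑C : Set V)) : V) := hadj0
    exact ⟨((p.getVert 1 : (↑C : Set V)) : V),
      hNsubW u₀ hu₀ (FuzzyGraph.mem_realNbrs'.2 hadj')⟩
  have hXfuzzy : IsFuzzyClique G X := fun u hu v hv huv =>
    hB1f u (hB2sub (hXsub hu)) v (hB2sub (hXsub hv)) huv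
  have hXcard : X.card ≤ 2 * k + c + 1 :=
    h5 W X hWne hWclique hXfuzzy (fun v hv => (Finset.mem_filter.1 hv).2)
  -- final contradiction
  have hWc1 : W.card * (c - 1) ≤ (3 * k * c + 1) * (c - 1) :=
    Nat.mul_le_mul_right (c - 1) hW
  have hexp : (3 * k * c + 1) * (c - 1) + (3 * k * c + 1) = (3 * k * c + 1) * c := by
    have hcm1 : c - 1 + 1 = c := Nat.sub_add_cancel hc
    calc (3 * k * c + 1) * (c - 1) + (3 * k * c + 1)
        = (3 * k * c + 1) * (c - 1 + 1) := by ring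
      _ = (3 * k * c + 1) * c := by rw [hcm1]
  have hBXfin : (B2 \ X).card ≤ (3 * k * c + 1) * (c - 1) + k := le_trans hB2Xcard (by omega)
  have hB12k : (B1 \ B2).card ≤ k := le_trans (Finset.card_le_card hB12cv) hcvk
  have hD2 : D.card ≤ 2 * k + 1 := le_trans hDPn (by omega)
  have hCtot : C.card ≤ (2 * k + 1) + (3 * k * c + 1) + k
      + ((3 * k * c + 1) * (c - 1) + k) + (2 * k + c + 1) := by linarith
  linarith [hbig, hCtot, hexp, hkc]
end

section
/- Let G = (V, E⁺, E⁰) be a fuzzy graph with weight function ω and let k be a nonnegative integer. Let K be a clique in G⁽⁺⁾ with |K| ≥ k + 3 such that all vertices of K have the same closed real neighborhood, i.e., ⋂_{x ∈ K} N⁺[x] = ⋃_{x ∈ K} N⁺[x]. Let v ∈ K and let F be the set of vertices having at least one fuzzy edge to a vertex of K (note that every u ∈ F then satisfies {u,v} ∈ E⁰ ∪ E⁻). For each u ∈ F with {u,v} ∈ E⁻, fix a vertex w_u ∈ K with {u,w_u} ∈ E⁰. Let G' be the fuzzy graph with weight function ω' obtained from G by, for each such u, removing {u,w_u} from E⁰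 (so that it becomes a nonedge) and setting ω'({u,w_u}) := ω({u,v}), keeping all other real edges, fuzzy edges and weights, and then deleting the vertex v. Then G admits a clustering of cost at most k if and only if G' admits a clustering of cost at most k. -/
open Finset

section Aux
set_option linter.unusedSectionVars false

variable {V : Type*} [Fintype V] [DecidableEq V]

lemma nonedge_symm {G : FuzzyGraph V} {u v : V} (h : G.nonedge u v) : G.nonedge v u := by
  obtain ⟨h1, h2, h3⟩ := h
  exact ⟨h1.symm, by rwa [G.real_symm], by rwa [G.fuzzy_symm]⟩

lemma together_refl (𝒞 : Finpartition (univ : Finset V)) (u : V) : together 𝒞 u u :=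
  ⟨𝒞.part u, 𝒞.part_mem.2 (mem_univ u), 𝒞.mem_part (mem_univ u), 𝒞.mem_part (mem_univ u)⟩

lemma together_symm {𝒞 : Finpartition (univ : Finset V)} {u v : V} (h : together 𝒞 u v) :
    together 𝒞 v u := by
  obtain ⟨C, h1, h2, h3⟩ := h; exact ⟨C, h1, h3, h2⟩

lemma together_trans {𝒞 : Finpartition (univ : Finset V)} {u v x : V}
    (h : together 𝒞 u v) (h' : together 𝒞 v x) : together 𝒞 u x := by
  obtain ⟨C, hC, hu, hv⟩ := h
  obtain ⟨D, hD, hv', hx⟩ := h'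
  exact ⟨C, hC, hu, 𝒞.eq_of_mem_parts hD hC hv' hv ▸ hx⟩

lemma together_iff_mem_part {𝒞 : Finpartition (univ : Finset V)} {u x : V} :
    together 𝒞 u x ↔ x ∈ 𝒞.part u := by
  constructor
  · rintro ⟨C, hC, hu, hx⟩; rwa [𝒞.part_eq_of_mem hC hu]
  · intro h; exact ⟨𝒞.part u, 𝒞.part_mem.2 (mem_univ u), 𝒞.mem_part (mem_univ u), h⟩

lemma together_ofSetoid {s : Setoid V} [DecidableRel s.r] {u x : V} :
    together (Finpartition.ofSetoid s) u x ↔ s.r u x := by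
  rw [together_iff_mem_part, Finpartition.mem_part_ofSetoid_iff_rel]

/-- The contribution of the ordered pair `(u,x)` to (twice) the cost. -/
def pterm (G : FuzzyGraph V) (ω : V → V → ℕ) (𝒞 : Finpartition (univ : Finset V))
    (u x : V) : ℕ :=
  (if G.real u x ∧ ¬together 𝒞 u x then ω u x else 0) +
  (if G.nonedge u x ∧ together 𝒞 u x then ω u x else 0)

lemma cost_eq (G : FuzzyGraph V) (ω : V → V → ℕ) (𝒞 : Finpartition (univ : Finset V)) :
    cost G ω 𝒞 = (∑ p ∈ univ.offDiag, pterm G ω 𝒞 p.1 p.2) / 2 := rfl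

lemma one_le_pterm_real {G : FuzzyGraph V} {ω : V → V → ℕ} {𝒞 : Finpartition (univ : Finset V)}
    {u x : V} (hr : G.real u x) (ht : ¬together 𝒞 u x) (hz : ω u x ≠ 0) :
    1 ≤ pterm G ω 𝒞 u x := by
  unfold pterm; rw [if_pos ⟨hr, ht⟩]; omega

lemma one_le_pterm_non {G : FuzzyGraph V} {ω : V → V → ℕ} {𝒞 : Finpartition (univ : Finset V)}
    {u x : V} (hn : G.nonedge u x) (ht : together 𝒞 u x) (hz : ω u x ≠ 0) :
    1 ≤ pterm G ω 𝒞 u x := by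
  unfold pterm; rw [if_neg (fun h => hn.2.1 h.1), if_pos ⟨hn, ht⟩]; omega

lemma pterm_congr {V₁ V₂ : Type*} [Fintype V₁] [DecidableEq V₁] [Fintype V₂] [DecidableEq V₂]
    {G₁ : FuzzyGraph V₁} {G₂ : FuzzyGraph V₂} {ω₁ : V₁ → V₁ → ℕ} {ω₂ : V₂ → V₂ → ℕ}
    {𝒞₁ : Finpartition (univ : Finset V₁)} {𝒞₂ : Finpartition (univ : Finset V₂)}
    {a₁ b₁ : V₁} {a₂ b₂ : V₂}
    (hr : (G₁.real a₁ b₁ : Prop) ↔ (G₂.real a₂ b₂ : Prop))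
    (hn : G₁.nonedge a₁ b₁ ↔ G₂.nonedge a₂ b₂)
    (ht : together 𝒞₁ a₁ b₁ ↔ together 𝒞₂ a₂ b₂)
    (hv : ω₁ a₁ b₁ = ω₂ a₂ b₂) :
    pterm G₁ ω₁ 𝒞₁ a₁ b₁ = pterm G₂ ω₂ 𝒞₂ a₂ b₂ := by
  unfold pterm
  rw [hv, if_congr (and_congr hr (not_congr ht)) rfl rfl, if_congr (and_congr hn ht) rfl rfl]

lemma sum_le_sum_inj {α β : Type*} [DecidableEq β] {s : Finset α} {t : Finset β}
    {f : α → ℕ} {g : β → ℕ} (e : α → β)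
    (he : ∀ a ∈ s, ∀ b ∈ s, e a = e b → a = b)
    (hm : ∀ a ∈ s, e a ∈ t) (hle : ∀ a ∈ s, f a ≤ g (e a)) :
    ∑ a ∈ s, f a ≤ ∑ b ∈ t, g b := by
  calc ∑ a ∈ s, f a ≤ ∑ a ∈ s, g (e a) := Finset.sum_le_sum hle
    _ = ∑ b ∈ s.image e, g b := (Finset.sum_image he).symm
    _ ≤ ∑ b ∈ t, g b := Finset.sum_le_sum_of_subset (fun b hb => by
        obtain ⟨a, ha, rfl⟩ := Finset.mem_image.1 hb; exact hm a ha)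

lemma clique_cohesion {G : FuzzyGraph V} {ω : V → V → ℕ}
    (hω0 : ∀ x y : V, x ≠ y → ω x y = 0 → G.fuzzy x y)
    {𝒞 : Finpartition (univ : Finset V)} {k : ℕ}
    (hcost : cost G ω 𝒞 ≤ k) {S : Finset V} (hS : IsRealClique G S)
    (hcard : k + 2 ≤ S.card) {a b : V} (ha : a ∈ S) (hb : b ∈ S) :
    together 𝒞 a b := by
  by_contra hab
  set A := S.filter (fun x => together 𝒞 a x) with hA
  set B := S.filter (fun x => ¬together 𝒞 a x) with hB
  have haA : a ∈ A := mem_filter.2 ⟨ha, together_refl _ _⟩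
  have hbB : b ∈ B := mem_filter.2 ⟨hb, hab⟩
  have hcut : ∀ x ∈ A, ∀ y ∈ B,
      1 ≤ pterm G ω 𝒞 x y ∧ 1 ≤ pterm G ω 𝒞 y x ∧ x ≠ y := by
    intro x hx y hy
    obtain ⟨hxS, hxt⟩ := mem_filter.1 hx
    obtain ⟨hyS, hyt⟩ := mem_filter.1 hy
    have hxy : x ≠ y := by rintro rfl; exact hyt hxt
    have hnt : ¬together 𝒞 x y := fun h => hyt (together_trans hxt h)
    have hr := hS x hxS y hyS hxy
    have hr' := hS y hyS x hxS hxy.symm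
    have hz : ω x y ≠ 0 := fun h0 => G.not_real_and_fuzzy x y ⟨hr, hω0 x y hxy h0⟩
    have hz' : ω y x ≠ 0 := fun h0 => G.not_real_and_fuzzy y x ⟨hr', hω0 y x hxy.symm h0⟩
    exact ⟨one_le_pterm_real hr hnt hz,
      one_le_pterm_real hr' (fun h => hnt (together_symm h)) hz', hxy⟩
  have hdisjAB : Disjoint A B := disjoint_filter_filter_not S S _
  have hdisj : Disjoint (A ×ˢ B) (B ×ˢ A) := by
    rw [Finset.disjoint_left]
    rintro ⟨x, y⟩ hx hy
    obtain ⟨h1, h2⟩ := Finset.mem_product.1 hx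
    obtain ⟨h3, h4⟩ := Finset.mem_product.1 hy
    exact Finset.disjoint_left.1 hdisjAB h1 h3
  have hAB : k + 1 ≤ A.card * B.card := by
    have h1 : 1 ≤ A.card := card_pos.2 ⟨a, haA⟩
    have h2 : 1 ≤ B.card := card_pos.2 ⟨b, hbB⟩
    have h3 : A.card + B.card = S.card := card_filter_add_card_filter_not _
    obtain ⟨x, hx⟩ := Nat.exists_eq_add_of_le h1
    obtain ⟨y, hy⟩ := Nat.exists_eq_add_of_le h2
    rw [hx, hy]
    have : k + 2 ≤ (1 + x) + (1 + y) := by omega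
    nlinarith
  have hsum : 2 * (k + 1) ≤ ∑ p ∈ univ.offDiag, pterm G ω 𝒞 p.1 p.2 := by
    calc 2 * (k + 1) ≤ 2 * (A.card * B.card) := by omega
      _ = ((A ×ˢ B) ∪ (B ×ˢ A)).card := by
          rw [Finset.card_union_of_disjoint hdisj, Finset.card_product, Finset.card_product]; ring
      _ = ∑ _p ∈ (A ×ˢ B) ∪ (B ×ˢ A), 1 := by rw [Finset.sum_const, smul_eq_mul, mul_one]
      _ ≤ ∑ p ∈ (A ×ˢ B) ∪ (B ×ˢ A), pterm G ω 𝒞 p.1 p.2 := by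
          refine Finset.sum_le_sum (fun p hp => ?_)
          rcases Finset.mem_union.1 hp with h | h <;> obtain ⟨h1, h2⟩ := Finset.mem_product.1 h
          · exact (hcut _ h1 _ h2).1
          · exact (hcut _ h2 _ h1).2.1
      _ ≤ ∑ p ∈ univ.offDiag, pterm G ω 𝒞 p.1 p.2 := by
          refine Finset.sum_le_sum_of_subset (fun p hp => ?_)
          rcases Finset.mem_union.1 hp with h | h <;> obtain ⟨h1, h2⟩ := Finset.mem_product.1 h
          · exact Finset.mem_offDiag.2 ⟨mem_univ _, mem_univ _, (hcut _ h1 _ h2).2.2⟩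
          · exact Finset.mem_offDiag.2 ⟨mem_univ _, mem_univ _, ((hcut _ h2 _ h1).2.2).symm⟩
  have hge : k + 1 ≤ cost G ω 𝒞 := by
    rw [cost_eq]
    exact (Nat.le_div_iff_mul_le two_pos).2 (by omega)
  omega

lemma star_lb {G : FuzzyGraph V} {ω : V → V → ℕ} {𝒞 : Finpartition (univ : Finset V)}
    (u : V) (T : Finset V) (hT : u ∉ T)
    (h : ∀ x ∈ T, 1 ≤ pterm G ω 𝒞 u x ∧ 1 ≤ pterm G ω 𝒞 x u) :
    T.card ≤ cost G ω 𝒞 := by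
  have hdisj : Disjoint ({u} ×ˢ T) (T ×ˢ {u}) := by
    rw [Finset.disjoint_left]
    rintro ⟨x, y⟩ hx hy
    obtain ⟨h1, h2⟩ := Finset.mem_product.1 hx
    obtain ⟨h3, h4⟩ := Finset.mem_product.1 hy
    rw [Finset.mem_singleton] at h1
    exact hT (h1 ▸ h3)
  have hsum : 2 * T.card ≤ ∑ p ∈ univ.offDiag, pterm G ω 𝒞 p.1 p.2 := by
    calc 2 * T.card = (({u} ×ˢ T) ∪ (T ×ˢ {u})).card := by
          rw [Finset.card_union_of_disjoint hdisj, Finset.card_product, Finset.card_product]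
          simp [Finset.card_singleton]; ring
      _ = ∑ _p ∈ ({u} ×ˢ T) ∪ (T ×ˢ {u}), 1 := by rw [Finset.sum_const, smul_eq_mul, mul_one]
      _ ≤ ∑ p ∈ ({u} ×ˢ T) ∪ (T ×ˢ {u}), pterm G ω 𝒞 p.1 p.2 := by
          refine Finset.sum_le_sum (fun p hp => ?_)
          rcases Finset.mem_union.1 hp with hh | hh <;>
            obtain ⟨h1, h2⟩ := Finset.mem_product.1 hh
          · rw [Finset.mem_singleton] at h1
            rw [h1]; exact (h _ h2).1
          · rw [Finset.mem_singleton] at h2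
            rw [h2]; exact (h _ h1).2
      _ ≤ ∑ p ∈ univ.offDiag, pterm G ω 𝒞 p.1 p.2 := by
          refine Finset.sum_le_sum_of_subset (fun p hp => ?_)
          rcases Finset.mem_union.1 hp with hh | hh <;>
            obtain ⟨h1, h2⟩ := Finset.mem_product.1 hh
          · rw [Finset.mem_singleton] at h1
            refine Finset.mem_offDiag.2 ⟨mem_univ _, mem_univ _, ?_⟩
            rw [h1]; rintro rfl; exact hT h2
          · rw [Finset.mem_singleton] at h2
            refine Finset.mem_offDiag.2 ⟨mem_univ _, mem_univ _, ?_⟩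
            rw [h2]; rintro rfl; exact hT h1
  rw [cost_eq]
  exact (Nat.le_div_iff_mul_le two_pos).2 (by omega)

end Aux

set_option maxHeartbeats 1000000
/-- Correctness of the rule redirecting fuzzy edges at a critical clique `K`
of size at least `k + 3` and deleting the vertex `v ∈ K`: for each vertex `u` with a fuzzy
edge into `K` and with `{u,v}` a nonedge, a chosen fuzzy edge `{u, w u}` into `K` is turned
into a nonedge of weight `ω({u,v})`; then `v` is deleted.  The resulting instance is
equivalent. -/
theorem stmt15 {V : Type*} [Fintype V] [DecidableEq V]
    (G : FuzzyGraph V) (ω : V → V → ℕ) (hω : IsWeight G ω) (k : ℕ)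
    (K : Finset V) (hK : IsRealClique G K) (hKcard : k + 3 ≤ K.card)
    (hKsame : K.inf G.closedRealNbrs = K.sup G.closedRealNbrs)
    (v : V) (hvK : v ∈ K)
    (w : V → V)
    (hw : ∀ u : V, (∃ x ∈ K, G.fuzzy u x) → G.nonedge u v → (w u ∈ K ∧ G.fuzzy u (w u)))
    (G' : FuzzyGraph {x : V // x ≠ v}) (ω' : {x : V // x ≠ v} → {x : V // x ≠ v} → ℕ)
    (hreal' : ∀ a b : {x : V // x ≠ v}, G'.real a b ↔ G.real a.1 b.1)
    (hfuzzy' : ∀ a b : {x : V // x ≠ v}, G'.fuzzy a b ↔ (G.fuzzy a.1 b.1 ∧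
      ¬((∃ x ∈ K, G.fuzzy a.1 x) ∧ G.nonedge a.1 v ∧ b.1 = w a.1) ∧
      ¬((∃ x ∈ K, G.fuzzy b.1 x) ∧ G.nonedge b.1 v ∧ a.1 = w b.1)))
    (hω' : ∀ a b : {x : V // x ≠ v}, ω' a b =
      if (∃ x ∈ K, G.fuzzy a.1 x) ∧ G.nonedge a.1 v ∧ b.1 = w a.1 then ω a.1 v
      else if (∃ x ∈ K, G.fuzzy b.1 x) ∧ G.nonedge b.1 v ∧ a.1 = w b.1 then ω b.1 v
      else ω a.1 b.1) :
    (∃ 𝒞 : Finpartition (Finset.univ : Finset V), cost G ω 𝒞 ≤ k) ↔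
    (∃ 𝒞' : Finpartition (Finset.univ : Finset {x : V // x ≠ v}), cost G' ω' 𝒞' ≤ k) := by
  have hωsymm := hω.1
  have hω0 : ∀ x y : V, x ≠ y → ω x y = 0 → G.fuzzy x y :=
    fun x y hxy h0 => (hω.2 x y hxy).1 h0
  have hvKreal : ∀ x ∈ K, x ≠ v → G.real x v := fun x hx hxv => hK x hx v hvK hxv
  have hKnotsrc : ∀ x ∈ K, ¬G.nonedge x v := fun x hx hn => hn.2.1 (hvKreal x hx hn.1)
  have hwnev : ∀ a : V, (∃ x ∈ K, G.fuzzy a x) → G.nonedge a v → w a ≠ v := by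
    intro a h1 h2 h3
    have hf := (hw a h1 h2).2
    rw [h3] at hf
    exact h2.2.2 hf
  have hwnea : ∀ a : V, (∃ x ∈ K, G.fuzzy a x) → G.nonedge a v → w a ≠ a := by
    intro a h1 h2 h3
    have hf := (hw a h1 h2).2
    rw [h3] at hf
    rw [G.fuzzy_irrefl] at hf
    exact Bool.noConfusion hf
  have hnbr : ∀ x ∈ K, ∀ y ∈ K, ∀ u : V, G.real x u → u = y ∨ G.real y u := by
    intro x hx y hy u hru
    have h1 : u ∈ G.closedRealNbrs x := by
      rw [FuzzyGraph.closedRealNbrs]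
      exact mem_insert_of_mem (mem_filter.2 ⟨mem_univ _, hru⟩)
    have h2 : u ∈ K.sup G.closedRealNbrs :=
      Finset.mem_of_subset (Finset.le_sup hx) h1
    rw [← hKsame] at h2
    have h3 : u ∈ G.closedRealNbrs y := Finset.mem_of_subset (Finset.inf_le hy) h2
    rw [FuzzyGraph.closedRealNbrs, mem_insert] at h3
    rcases h3 with h | h
    · exact Or.inl h
    · exact Or.inr (mem_filter.1 h).2
  constructor
  · rintro ⟨𝒞, hc⟩
    have hKtog : ∀ x ∈ K, ∀ y ∈ K, together 𝒞 x y :=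
      fun x hx y hy => clique_cohesion hω0 hc hK (by omega) hx hy
    let s' : Setoid {x : V // x ≠ v} :=
      ⟨fun a b => together 𝒞 a.1 b.1,
       ⟨fun a => together_refl 𝒞 a.1, fun h => together_symm h, fun h h' => together_trans h h'⟩⟩
    haveI : DecidableRel s'.r := fun a b => inferInstanceAs (Decidable (together 𝒞 a.1 b.1))
    refine ⟨Finpartition.ofSetoid s', ?_⟩
    have hbr : ∀ a b : {x : V // x ≠ v},
        together (Finpartition.ofSetoid s') a b ↔ together 𝒞 a.1 b.1 :=
      fun a b => together_ofSetoid
    rw [cost_eq] at hc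
    rw [cost_eq]
    refine le_trans (Nat.div_le_div_right ?_) hc
    refine sum_le_sum_inj
      (fun p : {x : V // x ≠ v} × {x : V // x ≠ v} =>
        if (∃ x ∈ K, G.fuzzy p.1.1 x) ∧ G.nonedge p.1.1 v ∧ p.2.1 = w p.1.1 then (p.1.1, v)
        else if (∃ x ∈ K, G.fuzzy p.2.1 x) ∧ G.nonedge p.2.1 v ∧ p.1.1 = w p.2.1 then (v, p.2.1)
        else (p.1.1, p.2.1)) ?_ ?_ ?_
    · -- injectivity
      rintro p hp q hq h
      by_cases hA1 : (∃ x ∈ K, G.fuzzy p.1.1 x) ∧ G.nonedge p.1.1 v ∧ p.2.1 = w p.1.1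
      · rw [if_pos hA1] at h
        by_cases hA2 : (∃ x ∈ K, G.fuzzy q.1.1 x) ∧ G.nonedge q.1.1 v ∧ q.2.1 = w q.1.1
        · rw [if_pos hA2, Prod.mk.injEq] at h
          refine Prod.ext_iff.2 ⟨Subtype.ext h.1, Subtype.ext ?_⟩
          rw [hA1.2.2, hA2.2.2, h.1]
        · rw [if_neg hA2] at h
          by_cases hB2 : (∃ x ∈ K, G.fuzzy q.2.1 x) ∧ G.nonedge q.2.1 v ∧ q.1.1 = w q.2.1
          · rw [if_pos hB2, Prod.mk.injEq] at h
            exact absurd h.1 p.1.2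
          · rw [if_neg hB2, Prod.mk.injEq] at h
            exact absurd h.2.symm q.2.2
      · rw [if_neg hA1] at h
        by_cases hB1 : (∃ x ∈ K, G.fuzzy p.2.1 x) ∧ G.nonedge p.2.1 v ∧ p.1.1 = w p.2.1
        · rw [if_pos hB1] at h
          by_cases hA2 : (∃ x ∈ K, G.fuzzy q.1.1 x) ∧ G.nonedge q.1.1 v ∧ q.2.1 = w q.1.1
          · rw [if_pos hA2, Prod.mk.injEq] at h
            exact absurd h.1.symm q.1.2
          · rw [if_neg hA2] at h
            by_cases hB2 : (∃ x ∈ K, G.fuzzy q.2.1 x) ∧ G.nonedge q.2.1 v ∧ q.1.1 = w q.2.1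
            · rw [if_pos hB2, Prod.mk.injEq] at h
              refine Prod.ext_iff.2 ⟨Subtype.ext ?_, Subtype.ext h.2⟩
              rw [hB1.2.2, hB2.2.2, h.2]
            · rw [if_neg hB2, Prod.mk.injEq] at h
              exact absurd h.1.symm q.1.2
        · rw [if_neg hB1] at h
          by_cases hA2 : (∃ x ∈ K, G.fuzzy q.1.1 x) ∧ G.nonedge q.1.1 v ∧ q.2.1 = w q.1.1
          · rw [if_pos hA2, Prod.mk.injEq] at h
            exact absurd h.2 p.2.2
          · rw [if_neg hA2] at h
            by_cases hB2 : (∃ x ∈ K, G.fuzzy q.2.1 x) ∧ G.nonedge q.2.1 v ∧ q.1.1 = w q.2.1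
            · rw [if_pos hB2, Prod.mk.injEq] at h
              exact absurd h.1 p.1.2
            · rw [if_neg hB2, Prod.mk.injEq] at h
              exact Prod.ext_iff.2 ⟨Subtype.ext h.1, Subtype.ext h.2⟩
    · -- maps into offDiag
      rintro ⟨a, b⟩ hp
      dsimp only
      split_ifs with h1 h2
      · exact Finset.mem_offDiag.2 ⟨mem_univ _, mem_univ _, a.2⟩
      · exact Finset.mem_offDiag.2 ⟨mem_univ _, mem_univ _, fun h => b.2 h.symm⟩
      · refine Finset.mem_offDiag.2 ⟨mem_univ _, mem_univ _, fun h => ?_⟩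
        exact (Finset.mem_offDiag.1 hp).2.2 (Subtype.ext h)
    · -- pointwise bound
      rintro ⟨a, b⟩ hp
      dsimp only
      split_ifs with h1 h2
      · -- a-redirected pair, mapped to (a.1, v)
        dsimp only
        obtain ⟨hwaK, hfaw⟩ := hw a.1 h1.1 h1.2.1
        have hfab : G.fuzzy a.1 b.1 := by rw [h1.2.2]; exact hfaw
        have hnr' : ¬G'.real a b := by
          rw [hreal' a b]; intro hr; exact G.not_real_and_fuzzy _ _ ⟨hr, hfab⟩
        have hnf' : ¬G'.fuzzy a b := by
          rw [hfuzzy' a b]; rintro ⟨-, hna, -⟩; exact hna h1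
        have hab : a ≠ b := by
          intro he
          exact hwnea a.1 h1.1 h1.2.1 (by rw [← h1.2.2, he])
        have hωab : ω' a b = ω a.1 v := by rw [hω' a b, if_pos h1]
        rw [pterm, pterm, if_neg (fun hh => hnr' hh.1), hωab]
        have key : (if G'.nonedge a b ∧ together (Finpartition.ofSetoid s') a b
              then ω a.1 v else 0) ≤
            (if G.nonedge a.1 v ∧ together 𝒞 a.1 v then ω a.1 v else 0) := by
          split_ifs with hx hy
          · exact le_refl _
          · exfalso
            apply hy
            refine ⟨h1.2.1, ?_⟩
            have ht1 : together 𝒞 a.1 b.1 := (hbr a b).1 hx.2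
            have ht2 : together 𝒞 b.1 v := by
              rw [h1.2.2]; exact hKtog (w a.1) hwaK v hvK
            exact together_trans ht1 ht2
          · exact Nat.zero_le _
          · exact Nat.zero_le _
        omega
      · -- b-redirected pair, mapped to (v, b.1)
        dsimp only
        obtain ⟨hwbK, hfbw⟩ := hw b.1 h2.1 h2.2.1
        have hfba : G.fuzzy b.1 a.1 := by rw [h2.2.2]; exact hfbw
        have hfab : G.fuzzy a.1 b.1 := by rwa [G.fuzzy_symm] at hfba
        have hnr' : ¬G'.real a b := by
          rw [hreal' a b]; intro hr; exact G.not_real_and_fuzzy _ _ ⟨hr, hfab⟩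
        have hnf' : ¬G'.fuzzy a b := by
          rw [hfuzzy' a b]; rintro ⟨-, -, hnb⟩; exact hnb h2
        have hωab : ω' a b = ω b.1 v := by rw [hω' a b, if_neg h1, if_pos h2]
        rw [pterm, pterm, if_neg (fun hh => hnr' hh.1), hωab]
        have key : (if G'.nonedge a b ∧ together (Finpartition.ofSetoid s') a b
              then ω b.1 v else 0) ≤
            (if G.nonedge v b.1 ∧ together 𝒞 v b.1 then ω v b.1 else 0) := by
          split_ifs with hx hy
          · exact le_of_eq (hωsymm b.1 v)
          · exfalso
            apply hy
            refine ⟨nonedge_symm h2.2.1, together_symm ?_⟩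
            have ht1 : together 𝒞 a.1 b.1 := (hbr a b).1 hx.2
            have ht2 : together 𝒞 a.1 v := by
              rw [h2.2.2]; exact hKtog (w b.1) hwbK v hvK
            exact together_trans (together_symm ht1) ht2
          · exact Nat.zero_le _
          · exact Nat.zero_le _
        omega
      · -- unchanged pair
        dsimp only
        refine le_of_eq (pterm_congr (hreal' a b) ?_ (hbr a b) ?_)
        · constructor
          · rintro ⟨hne, hnr, hnf⟩
            refine ⟨fun he => hne (Subtype.ext he), ?_, ?_⟩
            · rw [hreal' a b] at hnr; exact hnr
            · intro hf
              exact hnf ((hfuzzy' a b).2 ⟨hf, h1, h2⟩)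
          · rintro ⟨hne, hnr, hnf⟩
            refine ⟨fun he => hne (congrArg Subtype.val he), ?_, ?_⟩
            · rw [hreal' a b]; exact hnr
            · intro hf
              exact hnf ((hfuzzy' a b).1 hf).1
        · rw [hω' a b, if_neg h1, if_neg h2]
  · rintro ⟨𝒞', hc⟩
    set T := (K.erase v).subtype (fun x => x ≠ v) with hTdef
    have hTmem : ∀ a : {x : V // x ≠ v}, a ∈ T ↔ a.1 ∈ K.erase v := by
      intro a; rw [hTdef, Finset.mem_subtype]
    have hTcard : T.card = K.card - 1 := by
      rw [hTdef, Finset.card_subtype,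
        Finset.filter_true_of_mem (fun x hx => (Finset.mem_erase.1 hx).1),
        Finset.card_erase_of_mem hvK]
    have hclique' : IsRealClique G' T := by
      intro a ha b hb hab
      rw [hreal']
      exact hK a.1 (Finset.mem_of_mem_erase ((hTmem a).1 ha)) b.1
        (Finset.mem_of_mem_erase ((hTmem b).1 hb)) (fun h => hab (Subtype.ext h))
    have hω'0 : ∀ a b : {x : V // x ≠ v}, a ≠ b → ω' a b = 0 → G'.fuzzy a b := by
      intro a b hab h0
      rw [hω' a b] at h0
      split_ifs at h0 with h1 h2
      · exact absurd (hω0 a.1 v a.2 h0) h1.2.1.2.2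
      · exact absurd (hω0 b.1 v b.2 h0) h2.2.1.2.2
      · exact (hfuzzy' a b).2 ⟨hω0 a.1 b.1 (fun h => hab (Subtype.ext h)) h0, h1, h2⟩
    have hTtog : ∀ x ∈ T, ∀ y ∈ T, together 𝒞' x y :=
      fun x hx y hy => clique_cohesion hω'0 hc hclique' (by omega) hx hy
    obtain ⟨k0, hk0T⟩ : T.Nonempty := Finset.card_pos.1 (by omega)
    set ext := fun x : V => if hx : x = v then k0 else (⟨x, hx⟩ : {y : V // y ≠ v}) with hext
    have hextv : ext v = k0 := by rw [hext]; exact dif_pos rfl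
    have hextne : ∀ (x : V) (hx : x ≠ v), ext x = ⟨x, hx⟩ := by
      intro x hx; rw [hext]; exact dif_neg hx
    let s : Setoid V :=
      ⟨fun x y => together 𝒞' (ext x) (ext y),
       ⟨fun x => together_refl 𝒞' (ext x), fun h => together_symm h,
        fun h h' => together_trans h h'⟩⟩
    haveI : DecidableRel s.r := fun x y => inferInstanceAs (Decidable (together 𝒞' (ext x) (ext y)))
    refine ⟨Finpartition.ofSetoid s, ?_⟩
    have hbr : ∀ x y : V, together (Finpartition.ofSetoid s) x y ↔ together 𝒞' (ext x) (ext y) :=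
      fun x y => together_ofSetoid
    set 𝒞 := Finpartition.ofSetoid s with h𝒞
    have hKext : ∀ x ∈ K, together 𝒞' (ext x) k0 := by
      intro x hx
      by_cases hxv : x = v
      · rw [hxv, hextv]; exact together_refl _ _
      · rw [hextne x hxv]
        exact hTtog ⟨x, hxv⟩ ((hTmem _).2 (Finset.mem_erase.2 ⟨hxv, hx⟩)) k0 hk0T
    have Hreal : ∀ u : V, G.real u v → together 𝒞 u v := by
      intro u hru
      have huv : u ≠ v := by
        intro he; rw [he, G.real_irrefl] at hru; exact Bool.noConfusion hru
      by_contra htog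
      have huK : u ∉ K := fun huKmem => htog ((hbr u v).2 (by
        rw [hextv]; exact hKext u huKmem))
      have hb : T.card ≤ cost G' ω' 𝒞' := by
        apply star_lb (ext u) T
        · rw [hextne u huv]
          intro hmem
          exact huK (Finset.mem_of_mem_erase ((hTmem _).1 hmem))
        · intro x hx
          have hxK : x.1 ∈ K := Finset.mem_of_mem_erase ((hTmem x).1 hx)
          have hxu : x.1 ≠ u := fun he => huK (he ▸ hxK)
          have hrux : G.real u x.1 := by
            rcases hnbr v hvK x.1 hxK u (by rwa [G.real_symm] at hru) with h | h
            · exact absurd h.symm hxu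
            · rwa [G.real_symm]
          have hnt : ¬together 𝒞' (ext u) x := by
            intro ht
            exact htog ((hbr u v).2 (by
              rw [hextv]; exact together_trans ht (hTtog x hx k0 hk0T)))
          have hne : ext u ≠ x := by
            rw [hextne u huv]; intro he; exact hxu (congrArg Subtype.val he).symm
          have hr1 : G'.real (ext u) x := by rw [hreal', hextne u huv]; exact hrux
          have hr2 : G'.real x (ext u) := by rw [G'.real_symm]; exact hr1
          have hz1 : ω' (ext u) x ≠ 0 :=
            fun h0 => G'.not_real_and_fuzzy _ _ ⟨hr1, hω'0 _ _ hne h0⟩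
          have hz2 : ω' x (ext u) ≠ 0 :=
            fun h0 => G'.not_real_and_fuzzy _ _ ⟨hr2, hω'0 _ _ (Ne.symm hne) h0⟩
          exact ⟨one_le_pterm_real hr1 hnt hz1,
            one_le_pterm_real hr2 (fun ht => hnt (together_symm ht)) hz2⟩
      omega
    have HF : ∀ u : V, G.nonedge u v → together 𝒞 u v → (∃ x ∈ K, G.fuzzy u x) := by
      intro u hnuv htog
      by_contra hnF
      push_neg at hnF
      have huv : u ≠ v := hnuv.1
      have huK : u ∉ K := fun h => hKnotsrc u h hnuv
      have hb : T.card ≤ cost G' ω' 𝒞' := by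
        apply star_lb (ext u) T
        · rw [hextne u huv]
          intro hmem
          exact huK (Finset.mem_of_mem_erase ((hTmem _).1 hmem))
        · intro x hx
          have hxK : x.1 ∈ K := Finset.mem_of_mem_erase ((hTmem x).1 hx)
          have hxu : u ≠ x.1 := fun he => huK (he ▸ hxK)
          have hnr : ¬G.real u x.1 := by
            intro hr
            rcases hnbr x.1 hxK v hvK u (by rwa [G.real_symm] at hr) with h | h
            · exact huv h
            · exact hnuv.2.1 (by rwa [G.real_symm] at h)
          have hnf : ¬G.fuzzy u x.1 := hnF x.1 hxK
          have hnon : G.nonedge u x.1 := ⟨hxu, hnr, hnf⟩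
          have hne : ext u ≠ x := by
            rw [hextne u huv]; exact fun he => hxu (congrArg Subtype.val he)
          have hnr' : ¬G'.real (ext u) x := by rw [hreal', hextne u huv]; exact hnr
          have hnf' : ¬G'.fuzzy (ext u) x := by
            rw [hfuzzy', hextne u huv]; rintro ⟨hf, -, -⟩; exact hnf hf
          have hnon' : G'.nonedge (ext u) x := ⟨hne, hnr', hnf'⟩
          have ht' : together 𝒞' (ext u) x := by
            have h1 : together 𝒞' (ext u) k0 := by rw [← hextv]; exact (hbr u v).1 htog
            exact together_trans h1 (together_symm (hTtog x hx k0 hk0T))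
          have hxsrc : ¬G.nonedge x.1 v := hKnotsrc x.1 hxK
          have hval : ω' (ext u) x = ω u x.1 := by
            rw [hextne u huv, hω']
            rw [if_neg (fun h => by
              obtain ⟨⟨y, hy, hfy⟩, -, -⟩ := h; exact hnF y hy hfy),
              if_neg (fun h => hxsrc h.2.1)]
          have hval2 : ω' x (ext u) = ω x.1 u := by
            rw [hextne u huv, hω']
            rw [if_neg (fun h => hxsrc h.2.1),
              if_neg (fun h => by
                obtain ⟨⟨y, hy, hfy⟩, -, -⟩ := h; exact hnF y hy hfy)]
          have hz1 : ω' (ext u) x ≠ 0 := by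
            rw [hval]; exact fun h0 => hnf (hω0 u x.1 hxu h0)
          have hz2 : ω' x (ext u) ≠ 0 := by
            rw [hval2]
            intro h0
            have := hω0 x.1 u (Ne.symm hxu) h0
            rw [G.fuzzy_symm] at this
            exact hnf this
          exact ⟨one_le_pterm_non hnon' ht' hz1,
            one_le_pterm_non (nonedge_symm hnon') (together_symm ht') hz2⟩
      omega
    -- main bound
    rw [cost_eq] at hc ⊢
    refine le_trans (Nat.div_le_div_right ?_) hc
    rw [← Finset.sum_filter_ne_zero]
    have hfz : ∀ a b : V, G.fuzzy a b → pterm G ω 𝒞 a b = 0 := by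
      intro a b hf
      rw [pterm, if_neg (fun h => G.not_real_and_fuzzy a b ⟨h.1, hf⟩),
        if_neg (fun h => h.1.2.2 hf)]
    have hDv2 : ∀ u : V, u ≠ v → pterm G ω 𝒞 u v ≠ 0 →
        G.nonedge u v ∧ together 𝒞 u v ∧ (∃ x ∈ K, G.fuzzy u x) ∧
          pterm G ω 𝒞 u v = ω u v := by
      intro u huv hne
      have h1 : (if G.real u v ∧ ¬together 𝒞 u v then ω u v else 0) = 0 := by
        rw [if_neg]; rintro ⟨hr, ht⟩; exact ht (Hreal u hr)
      rw [pterm, h1, zero_add] at hne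
      by_cases hcnd : G.nonedge u v ∧ together 𝒞 u v
      · exact ⟨hcnd.1, hcnd.2, HF u hcnd.1 hcnd.2,
          by rw [pterm, h1, zero_add, if_pos hcnd]⟩
      · rw [if_neg hcnd] at hne; exact absurd rfl hne
    have hDv1 : ∀ u : V, u ≠ v → pterm G ω 𝒞 v u ≠ 0 →
        G.nonedge u v ∧ together 𝒞 u v ∧ (∃ x ∈ K, G.fuzzy u x) ∧
          pterm G ω 𝒞 v u = ω u v := by
      intro u huv hne
      have h1 : (if G.real v u ∧ ¬together 𝒞 v u then ω v u else 0) = 0 := by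
        rw [if_neg]
        rintro ⟨hr, ht⟩
        exact ht (together_symm (Hreal u (by rwa [G.real_symm] at hr)))
      rw [pterm, h1, zero_add] at hne
      by_cases hcnd : G.nonedge v u ∧ together 𝒞 v u
      · refine ⟨nonedge_symm hcnd.1, together_symm hcnd.2,
          HF u (nonedge_symm hcnd.1) (together_symm hcnd.2), ?_⟩
        rw [pterm, h1, zero_add, if_pos hcnd]
        exact hωsymm v u
      · rw [if_neg hcnd] at hne; exact absurd rfl hne
    have hperm : ∀ (u : V) (hu : u ≠ v) (hwv : w u ≠ v), G.nonedge u v → together 𝒞 u v →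
        (∃ x ∈ K, G.fuzzy u x) →
        ω u v ≤ pterm G' ω' 𝒞' ⟨u, hu⟩ ⟨w u, hwv⟩ ∧
        ω u v ≤ pterm G' ω' 𝒞' ⟨w u, hwv⟩ ⟨u, hu⟩ := by
      intro u hu hwv hn ht hsrc
      obtain ⟨hwK, hwf⟩ := hw u hsrc hn
      have hcond : (∃ x ∈ K, G.fuzzy ((⟨u, hu⟩ : {x : V // x ≠ v}).1) x) ∧
          G.nonedge ((⟨u, hu⟩ : {x : V // x ≠ v}).1) v ∧
          ((⟨w u, hwv⟩ : {x : V // x ≠ v}).1) = w ((⟨u, hu⟩ : {x : V // x ≠ v}).1) :=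
        ⟨hsrc, hn, rfl⟩
      have hnr' : ¬G'.real ⟨u, hu⟩ ⟨w u, hwv⟩ := by
        rw [hreal']; intro hr; exact G.not_real_and_fuzzy u (w u) ⟨hr, hwf⟩
      have hnf' : ¬G'.fuzzy ⟨u, hu⟩ ⟨w u, hwv⟩ := by
        rw [hfuzzy']; rintro ⟨-, hna, -⟩; exact hna hcond
      have hne : (⟨u, hu⟩ : {x : V // x ≠ v}) ≠ ⟨w u, hwv⟩ :=
        fun he => hwnea u hsrc hn (congrArg Subtype.val he).symm
      have hnon' : G'.nonedge ⟨u, hu⟩ ⟨w u, hwv⟩ := ⟨hne, hnr', hnf'⟩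
      have htog' : together 𝒞' ⟨u, hu⟩ ⟨w u, hwv⟩ := by
        have h1 : together 𝒞' (ext u) k0 := by rw [← hextv]; exact (hbr u v).1 ht
        have h2 : together 𝒞' (ext (w u)) k0 := hKext (w u) hwK
        have h3 := together_trans h1 (together_symm h2)
        rwa [hextne u hu, hextne (w u) hwv] at h3
      have hval : ω' ⟨u, hu⟩ ⟨w u, hwv⟩ = ω u v := by rw [hω', if_pos hcond]
      have hcondK : ¬((∃ x ∈ K, G.fuzzy ((⟨w u, hwv⟩ : {x : V // x ≠ v}).1) x) ∧
          G.nonedge ((⟨w u, hwv⟩ : {x : V // x ≠ v}).1) v ∧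
          ((⟨u, hu⟩ : {x : V // x ≠ v}).1) = w ((⟨w u, hwv⟩ : {x : V // x ≠ v}).1)) :=
        fun h => hKnotsrc (w u) hwK h.2.1
      have hval2 : ω' ⟨w u, hwv⟩ ⟨u, hu⟩ = ω u v := by
        rw [hω', if_neg hcondK, if_pos hcond]
      have hnr'' : ¬G'.real ⟨w u, hwv⟩ ⟨u, hu⟩ := by rw [G'.real_symm]; exact hnr'
      constructor
      · rw [pterm, hval, if_neg (fun hh => hnr' hh.1), if_pos ⟨hnon', htog'⟩]
        exact Nat.le_add_left _ _
      · rw [pterm, hval2, if_neg (fun hh => hnr'' hh.1),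
          if_pos ⟨nonedge_symm hnon', together_symm htog'⟩]
        exact Nat.le_add_left _ _
    refine sum_le_sum_inj
      (fun p : V × V =>
        if p.2 = v then (ext p.1, ext (w p.1))
        else if p.1 = v then (ext (w p.2), ext p.2)
        else (ext p.1, ext p.2)) ?_ ?_ ?_
    · -- injectivity
      rintro p hp q hq h
      obtain ⟨hpD, hpz⟩ := Finset.mem_filter.1 hp
      obtain ⟨hqD, hqz⟩ := Finset.mem_filter.1 hq
      have hpne := (Finset.mem_offDiag.1 hpD).2.2
      have hqne := (Finset.mem_offDiag.1 hqD).2.2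
      by_cases hp2 : p.2 = v
      · rw [if_pos hp2] at h
        have hp1 : p.1 ≠ v := fun he => hpne (he.trans hp2.symm)
        rw [hp2] at hpz
        obtain ⟨hpn, hpt, hpsrc, hpval⟩ := hDv2 p.1 hp1 hpz
        rw [hextne p.1 hp1, hextne (w p.1) (hwnev p.1 hpsrc hpn)] at h
        by_cases hq2 : q.2 = v
        · rw [if_pos hq2] at h
          have hq1 : q.1 ≠ v := fun he => hqne (he.trans hq2.symm)
          rw [hq2] at hqz
          obtain ⟨hqn, hqt, hqsrc, hqval⟩ := hDv2 q.1 hq1 hqz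
          rw [hextne q.1 hq1, hextne (w q.1) (hwnev q.1 hqsrc hqn), Prod.mk.injEq] at h
          exact Prod.ext_iff.2 ⟨congrArg Subtype.val h.1, hp2.trans hq2.symm⟩
        · rw [if_neg hq2] at h
          by_cases hq1 : q.1 = v
          · rw [if_pos hq1] at h
            rw [hq1] at hqz
            obtain ⟨hqn, hqt, hqsrc, hqval⟩ := hDv1 q.2 hq2 hqz
            rw [hextne (w q.2) (hwnev q.2 hqsrc hqn), hextne q.2 hq2, Prod.mk.injEq] at h
            have e1 : p.1 = w q.2 := congrArg Subtype.val h.1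
            have hmemK : p.1 ∈ K := by rw [e1]; exact (hw q.2 hqsrc hqn).1
            exact absurd hpn (hKnotsrc p.1 hmemK)
          · rw [if_neg hq1] at h
            rw [hextne q.1 hq1, hextne q.2 hq2, Prod.mk.injEq] at h
            exfalso
            apply hqz
            have e1 : p.1 = q.1 := congrArg Subtype.val h.1
            have e2 : w p.1 = q.2 := congrArg Subtype.val h.2
            rw [← e1, ← e2]
            exact hfz p.1 (w p.1) (hw p.1 hpsrc hpn).2
      · rw [if_neg hp2] at h
        by_cases hp1 : p.1 = v
        · rw [if_pos hp1] at h
          rw [hp1] at hpz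
          obtain ⟨hpn, hpt, hpsrc, hpval⟩ := hDv1 p.2 hp2 hpz
          rw [hextne (w p.2) (hwnev p.2 hpsrc hpn), hextne p.2 hp2] at h
          by_cases hq2 : q.2 = v
          · rw [if_pos hq2] at h
            have hq1 : q.1 ≠ v := fun he => hqne (he.trans hq2.symm)
            rw [hq2] at hqz
            obtain ⟨hqn, hqt, hqsrc, hqval⟩ := hDv2 q.1 hq1 hqz
            rw [hextne q.1 hq1, hextne (w q.1) (hwnev q.1 hqsrc hqn), Prod.mk.injEq] at h
            have e1 : w p.2 = q.1 := congrArg Subtype.val h.1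
            have hmemK : q.1 ∈ K := by rw [← e1]; exact (hw p.2 hpsrc hpn).1
            exact absurd hqn (hKnotsrc q.1 hmemK)
          · rw [if_neg hq2] at h
            by_cases hq1 : q.1 = v
            · rw [if_pos hq1] at h
              rw [hq1] at hqz
              obtain ⟨hqn, hqt, hqsrc, hqval⟩ := hDv1 q.2 hq2 hqz
              rw [hextne (w q.2) (hwnev q.2 hqsrc hqn), hextne q.2 hq2, Prod.mk.injEq] at h
              exact Prod.ext_iff.2 ⟨hp1.trans hq1.symm, congrArg Subtype.val h.2⟩
            · rw [if_neg hq1] at h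
              rw [hextne q.1 hq1, hextne q.2 hq2, Prod.mk.injEq] at h
              exfalso
              apply hqz
              have e1 : w p.2 = q.1 := congrArg Subtype.val h.1
              have e2 : p.2 = q.2 := congrArg Subtype.val h.2
              rw [← e1, ← e2]
              apply hfz
              have h5 := (hw p.2 hpsrc hpn).2
              rwa [G.fuzzy_symm] at h5
        · rw [if_neg hp1] at h
          rw [hextne p.1 hp1, hextne p.2 hp2] at h
          by_cases hq2 : q.2 = v
          · rw [if_pos hq2] at h
            have hq1 : q.1 ≠ v := fun he => hqne (he.trans hq2.symm)
            rw [hq2] at hqz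
            obtain ⟨hqn, hqt, hqsrc, hqval⟩ := hDv2 q.1 hq1 hqz
            rw [hextne q.1 hq1, hextne (w q.1) (hwnev q.1 hqsrc hqn), Prod.mk.injEq] at h
            exfalso
            apply hpz
            have e1 : p.1 = q.1 := congrArg Subtype.val h.1
            have e2 : p.2 = w q.1 := congrArg Subtype.val h.2
            rw [e1, e2]
            exact hfz q.1 (w q.1) (hw q.1 hqsrc hqn).2
          · rw [if_neg hq2] at h
            by_cases hq1 : q.1 = v
            · rw [if_pos hq1] at h
              rw [hq1] at hqz
              obtain ⟨hqn, hqt, hqsrc, hqval⟩ := hDv1 q.2 hq2 hqz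
              rw [hextne (w q.2) (hwnev q.2 hqsrc hqn), hextne q.2 hq2, Prod.mk.injEq] at h
              exfalso
              apply hpz
              have e1 : p.1 = w q.2 := congrArg Subtype.val h.1
              have e2 : p.2 = q.2 := congrArg Subtype.val h.2
              rw [e1, e2]
              apply hfz
              have h5 := (hw q.2 hqsrc hqn).2
              rwa [G.fuzzy_symm] at h5
            · rw [if_neg hq1] at h
              rw [hextne q.1 hq1, hextne q.2 hq2, Prod.mk.injEq] at h
              exact Prod.ext_iff.2 ⟨congrArg Subtype.val h.1, congrArg Subtype.val h.2⟩
    · -- maps into offDiag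
      rintro p hp
      obtain ⟨hpD, hpz⟩ := Finset.mem_filter.1 hp
      have hpne := (Finset.mem_offDiag.1 hpD).2.2
      by_cases hp2 : p.2 = v
      · rw [if_pos hp2]
        have hp1 : p.1 ≠ v := fun he => hpne (he.trans hp2.symm)
        rw [hp2] at hpz
        obtain ⟨hpn, -, hpsrc, -⟩ := hDv2 p.1 hp1 hpz
        refine Finset.mem_offDiag.2 ⟨mem_univ _, mem_univ _, ?_⟩
        rw [hextne p.1 hp1, hextne (w p.1) (hwnev p.1 hpsrc hpn)]
        intro he
        exact hwnea p.1 hpsrc hpn (congrArg Subtype.val he).symm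
      · rw [if_neg hp2]
        by_cases hp1 : p.1 = v
        · rw [if_pos hp1]
          rw [hp1] at hpz
          obtain ⟨hpn, -, hpsrc, -⟩ := hDv1 p.2 hp2 hpz
          refine Finset.mem_offDiag.2 ⟨mem_univ _, mem_univ _, ?_⟩
          rw [hextne (w p.2) (hwnev p.2 hpsrc hpn), hextne p.2 hp2]
          intro he
          exact hwnea p.2 hpsrc hpn (congrArg Subtype.val he)
        · rw [if_neg hp1]
          refine Finset.mem_offDiag.2 ⟨mem_univ _, mem_univ _, ?_⟩
          rw [hextne p.1 hp1, hextne p.2 hp2]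
          intro he
          exact hpne (congrArg Subtype.val he)
    · -- pointwise
      rintro p hp
      obtain ⟨hpD, hpz⟩ := Finset.mem_filter.1 hp
      have hpne := (Finset.mem_offDiag.1 hpD).2.2
      by_cases hp2 : p.2 = v
      · rw [if_pos hp2, hp2]
        rw [hp2] at hpz
        have hp1 : p.1 ≠ v := fun he => hpne (he.trans hp2.symm)
        obtain ⟨hpn, hpt, hpsrc, hpval⟩ := hDv2 p.1 hp1 hpz
        rw [hextne p.1 hp1, hextne (w p.1) (hwnev p.1 hpsrc hpn)]
        dsimp only
        rw [hpval]
        exact (hperm p.1 hp1 (hwnev p.1 hpsrc hpn) hpn hpt hpsrc).1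
      · rw [if_neg hp2]
        by_cases hp1 : p.1 = v
        · rw [if_pos hp1, hp1]
          rw [hp1] at hpz
          obtain ⟨hpn, hpt, hpsrc, hpval⟩ := hDv1 p.2 hp2 hpz
          rw [hextne (w p.2) (hwnev p.2 hpsrc hpn), hextne p.2 hp2]
          dsimp only
          rw [hpval]
          exact (hperm p.2 hp2 (hwnev p.2 hpsrc hpn) hpn hpt hpsrc).2
        · rw [if_neg hp1]
          rw [hextne p.1 hp1, hextne p.2 hp2]
          dsimp only
          have hA : ¬((∃ x ∈ K, G.fuzzy p.1 x) ∧ G.nonedge p.1 v ∧ p.2 = w p.1) := by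
            rintro ⟨hsrc, hn, he⟩
            apply hpz
            rw [he]
            exact hfz p.1 (w p.1) (hw p.1 hsrc hn).2
          have hB : ¬((∃ x ∈ K, G.fuzzy p.2 x) ∧ G.nonedge p.2 v ∧ p.1 = w p.2) := by
            rintro ⟨hsrc, hn, he⟩
            apply hpz
            rw [he]
            apply hfz
            have h5 := (hw p.2 hsrc hn).2
            rwa [G.fuzzy_symm] at h5
          refine le_of_eq (pterm_congr ((hreal' ⟨p.1, hp1⟩ ⟨p.2, hp2⟩).symm) ?_ ?_ ?_)
          · constructor
            · rintro ⟨hne, hnr, hnf⟩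
              refine ⟨fun he => hne (congrArg Subtype.val he), ?_, ?_⟩
              · rw [hreal']; exact hnr
              · intro hf; exact hnf ((hfuzzy' _ _).1 hf).1
            · rintro ⟨hne, hnr, hnf⟩
              refine ⟨fun he => hne (Subtype.ext he), ?_, ?_⟩
              · rw [hreal'] at hnr; exact hnr
              · intro hf; exact hnf ((hfuzzy' _ _).2 ⟨hf, hA, hB⟩)
          · rw [hbr p.1 p.2, hextne p.1 hp1, hextne p.2 hp2]
          · rw [hω', if_neg hA, if_neg hB]
end
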